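/- arXiv:1503.06650 — 6 statements merged into one kernel-verified Lean document; each statement's English description precedes it below -/
import Mathlib

section
/- Let g_1, …, g_k ∈ ℝ[x_1,…,x_n] and let X = {x ∈ ℝⁿ : g_i(x) ≥ 0, i = 1,…,k}. Suppose there exist N ≥ 0 and d_0 > 0 such that the polynomial N − ‖x‖² belongs to the truncated quadratic module Q_{d_0}(X). Then every polynomial p ∈ ℝ[x_1,…,x_n] that is strictly positive at every point of X belongs to Q_d(X) for some d ≥ 0. (Putinar's Positivstellensatz.) -/
open MvPolynomial

/-- `SOSdeg k` is the set of sums of squares of polynomials of degree at most `k`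
(hence the set of SOS polynomials of degree at most `2k`). -/
def SOSdeg {n : ℕ} (k : ℕ) : Set (MvPolynomial (Fin n) ℝ) :=
  {p | ∃ m : Multiset (MvPolynomial (Fin n) ℝ),
    (∀ q ∈ m, q.totalDegree ≤ k) ∧ p = (m.map (fun q => q ^ 2)).sum}

/-- `QModule g d` is the truncated quadratic module of degree `d` associated to the
polynomials `g i`: polynomials of the form `s₀ + ∑ i, g i * s i` where `s₀` is an SOS
of degree at most `2⌊d/2⌋` and `s i` is an SOS of degree at most `2⌊(d - deg g i)/2⌋`. -/
def QModule {n k : ℕ} (g : Fin k → MvPolynomial (Fin n) ℝ) (d : ℕ) :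
    Set (MvPolynomial (Fin n) ℝ) :=
  {p | ∃ s₀ : MvPolynomial (Fin n) ℝ, ∃ s : Fin k → MvPolynomial (Fin n) ℝ,
    s₀ ∈ SOSdeg (d / 2) ∧ (∀ i, s i ∈ SOSdeg ((d - (g i).totalDegree) / 2)) ∧
    p = s₀ + ∑ i, g i * s i}


namespace PutinarAux

variable {n : ℕ}

/-- sums of squares, no degree bound -/
def IsSOS (t : MvPolynomial (Fin n) ℝ) : Prop :=
  ∃ m : Multiset (MvPolynomial (Fin n) ℝ), t = (m.map (fun q => q ^ 2)).sum

lemma IsSOS.zero : IsSOS (0 : MvPolynomial (Fin n) ℝ) := ⟨0, by simp⟩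

lemma IsSOS.sq (f : MvPolynomial (Fin n) ℝ) : IsSOS (f ^ 2) := ⟨{f}, by simp⟩

lemma IsSOS.one : IsSOS (1 : MvPolynomial (Fin n) ℝ) := by
  simpa using IsSOS.sq (1 : MvPolynomial (Fin n) ℝ)

lemma IsSOS.add {a b : MvPolynomial (Fin n) ℝ} (ha : IsSOS a) (hb : IsSOS b) :
    IsSOS (a + b) := by
  obtain ⟨m₁, rfl⟩ := ha; obtain ⟨m₂, rfl⟩ := hb
  exact ⟨m₁ + m₂, by simp⟩

lemma IsSOS.const {c : ℝ} (hc : 0 ≤ c) : IsSOS (C c : MvPolynomial (Fin n) ℝ) := by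
  refine ⟨{C (Real.sqrt c)}, ?_⟩
  simp [← map_pow, Real.sq_sqrt hc]

lemma IsSOS.sq_mul (f : MvPolynomial (Fin n) ℝ) {t : MvPolynomial (Fin n) ℝ}
    (ht : IsSOS t) : IsSOS (f ^ 2 * t) := by
  obtain ⟨m, rfl⟩ := ht
  refine ⟨m.map (fun q => f * q), ?_⟩
  simp [Multiset.map_map, Function.comp_def, Multiset.sum_map_mul_left, mul_pow]

lemma IsSOS.smul {c : ℝ} (hc : 0 ≤ c) {t : MvPolynomial (Fin n) ℝ} (ht : IsSOS t) :
    IsSOS (C c * t) := by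
  have := IsSOS.sq_mul (C (Real.sqrt c)) ht
  rwa [← map_pow, Real.sq_sqrt hc] at this

lemma IsSOS.mem_SOSdeg {t : MvPolynomial (Fin n) ℝ} (ht : IsSOS t) :
    ∃ j, t ∈ SOSdeg j := by
  obtain ⟨m, rfl⟩ := ht
  refine ⟨(m.map totalDegree).sum, m, fun q hq => ?_, rfl⟩
  exact Multiset.single_le_sum (by simp) _ (Multiset.mem_map_of_mem _ hq)

lemma SOSdeg_mono {j j' : ℕ} (h : j ≤ j') : (SOSdeg j : Set (MvPolynomial (Fin n) ℝ)) ⊆ SOSdeg j' :=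
  fun _ ⟨m, hm, he⟩ => ⟨m, fun q hq => le_trans (hm q hq) h, he⟩

lemma SOSdeg_isSOS {j : ℕ} {t : MvPolynomial (Fin n) ℝ} (ht : t ∈ SOSdeg j) : IsSOS t := by
  obtain ⟨m, _, rfl⟩ := ht; exact ⟨m, rfl⟩

variable {n : ℕ}

/-- abstract quadratic module -/
structure IsQM (Q : Set (MvPolynomial (Fin n) ℝ)) : Prop where
  add_mem : ∀ {a b}, a ∈ Q → b ∈ Q → a + b ∈ Q
  sq_mul_mem : ∀ (f : MvPolynomial (Fin n) ℝ) {a}, a ∈ Q → f ^ 2 * a ∈ Q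
  sq_mem : ∀ f : MvPolynomial (Fin n) ℝ, f ^ 2 ∈ Q

namespace IsQM

variable {Q : Set (MvPolynomial (Fin n) ℝ)} (hQ : IsQM Q)
include hQ

lemma zero_mem : (0 : MvPolynomial (Fin n) ℝ) ∈ Q := by
  simpa using hQ.sq_mem 0

lemma one_mem : (1 : MvPolynomial (Fin n) ℝ) ∈ Q := by
  simpa using hQ.sq_mem 1

lemma smul_mem {c : ℝ} (hc : 0 ≤ c) {a : MvPolynomial (Fin n) ℝ} (ha : a ∈ Q) :
    C c * a ∈ Q := by
  have := hQ.sq_mul_mem (C (Real.sqrt c)) ha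
  rwa [← map_pow, Real.sq_sqrt hc] at this

lemma const_mem {c : ℝ} (hc : 0 ≤ c) : (C c : MvPolynomial (Fin n) ℝ) ∈ Q := by
  simpa using hQ.smul_mem hc hQ.one_mem

lemma sos_mem {t : MvPolynomial (Fin n) ℝ} (ht : IsSOS t) : t ∈ Q := by
  obtain ⟨m, rfl⟩ := ht
  induction m using Multiset.induction with
  | empty => simpa using hQ.zero_mem
  | cons a s ih => simpa using hQ.add_mem (hQ.sq_mem a) ih

lemma sos_mul_mem {t a : MvPolynomial (Fin n) ℝ} (ht : IsSOS t) (ha : a ∈ Q) :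
    t * a ∈ Q := by
  obtain ⟨m, rfl⟩ := ht
  induction m using Multiset.induction with
  | empty => simpa using hQ.zero_mem
  | cons b s ih =>
    have : ((b ::ₘ s).map (fun q => q ^ 2)).sum * a
        = b ^ 2 * a + (s.map (fun q => q ^ 2)).sum * a := by
      simp [add_mul]
    rw [this]
    exact hQ.add_mem (hQ.sq_mul_mem b ha) ih

/-- support is an ideal: if `±s ∈ Q` then `f*s ∈ Q`. -/
lemma supp_mul_mem {s : MvPolynomial (Fin n) ℝ} (hs : s ∈ Q) (hs' : -s ∈ Q)
    (f : MvPolynomial (Fin n) ℝ) : f * s ∈ Q := by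
  have h1 : (f + 1) ^ 2 * s ∈ Q := hQ.sq_mul_mem _ hs
  have h2 : f ^ 2 * (-s) ∈ Q := hQ.sq_mul_mem _ hs'
  have h3 : C (1/2 : ℝ) * ((f+1)^2 * s + (f^2 * (-s) + -s)) ∈ Q :=
    hQ.smul_mem (by norm_num) (hQ.add_mem h1 (hQ.add_mem h2 hs'))
  have key : (f+1)^2 * s + (f^2 * (-s) + -s) = C (2:ℝ) * (f*s) := by
    have h2' : (C (2:ℝ) : MvPolynomial (Fin n) ℝ) = 2 := by
      exact map_ofNat C 2
    rw [h2']; ring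
  rw [key, ← mul_assoc, ← map_mul] at h3
  norm_num at h3
  exact h3

end IsQM

section Mset

variable {n k : ℕ} (g : Fin k → MvPolynomial (Fin n) ℝ)

/-- the (untruncated) quadratic module generated by the `g i` -/
def Mset : Set (MvPolynomial (Fin n) ℝ) :=
  {f | ∃ s₀ : MvPolynomial (Fin n) ℝ, ∃ s : Fin k → MvPolynomial (Fin n) ℝ,
    IsSOS s₀ ∧ (∀ i, IsSOS (s i)) ∧ f = s₀ + ∑ i, g i * s i}

lemma QModule_subset_Mset (d : ℕ) : QModule g d ⊆ Mset g := by
  rintro f ⟨s₀, s, h₀, hs, rfl⟩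
  exact ⟨s₀, s, SOSdeg_isSOS h₀, fun i => SOSdeg_isSOS (hs i), rfl⟩

lemma Mset_subset_union {f : MvPolynomial (Fin n) ℝ} (hf : f ∈ Mset g) :
    ∃ d, f ∈ QModule g d := by
  obtain ⟨s₀, s, h₀, hs, rfl⟩ := hf
  obtain ⟨j₀, hj₀⟩ := h₀.mem_SOSdeg
  choose j hj using fun i => (hs i).mem_SOSdeg
  set J : ℕ := j₀ + ∑ i, j i with hJ
  set G : ℕ := ∑ i, (g i).totalDegree with hG
  refine ⟨2 * J + G, s₀, s, ?_, fun i => ?_, rfl⟩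
  · refine SOSdeg_mono ?_ hj₀
    have : j₀ ≤ J := Nat.le_add_right _ _
    calc j₀ ≤ J := this
      _ = (2 * J) / 2 := by omega
      _ ≤ (2 * J + G) / 2 := Nat.div_le_div_right (Nat.le_add_right _ _)
  · refine SOSdeg_mono ?_ (hj i)
    have h1 : j i ≤ J := by
      have : j i ≤ ∑ i, j i := Finset.single_le_sum (fun _ _ => Nat.zero_le _) (Finset.mem_univ i)
      omega
    have h2 : (g i).totalDegree ≤ G := by
      rw [hG]
      exact Finset.single_le_sum (f := fun j => (g j).totalDegree) (fun _ _ => Nat.zero_le _) (Finset.mem_univ i)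
    calc j i ≤ J := h1
      _ = (2 * J) / 2 := by omega
      _ ≤ (2 * J + G - (g i).totalDegree) / 2 := Nat.div_le_div_right (by omega)

lemma isQM_Mset : IsQM (Mset g) where
  add_mem := by
    rintro a b ⟨s₀, s, h₀, hs, rfl⟩ ⟨t₀, t, h₀', ht, rfl⟩
    refine ⟨s₀ + t₀, fun i => s i + t i, h₀.add h₀', fun i => (hs i).add (ht i), ?_⟩
    simp only [mul_add, Finset.sum_add_distrib]
    ring
  sq_mul_mem := by
    rintro f a ⟨s₀, s, h₀, hs, rfl⟩
    refine ⟨f ^ 2 * s₀, fun i => f ^ 2 * s i, h₀.sq_mul f, fun i => (hs i).sq_mul f, ?_⟩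
    rw [mul_add, Finset.mul_sum]
    congr 1
    apply Finset.sum_congr rfl
    intro i _
    ring
  sq_mem := fun f => ⟨f ^ 2, fun _ => 0, IsSOS.sq f, fun _ => IsSOS.zero, by simp⟩

lemma sos_mem_Mset {t : MvPolynomial (Fin n) ℝ} (ht : IsSOS t) : t ∈ Mset g :=
  (isQM_Mset g).sos_mem ht

lemma g_mem_Mset (i : Fin k) : g i ∈ Mset g := by
  refine ⟨0, fun j => if j = i then 1 else 0, IsSOS.zero, fun j => ?_, ?_⟩
  · by_cases h : j = i <;> simp [h, IsSOS.one, IsSOS.zero]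
  · rw [Finset.sum_eq_single i (fun b _ hb => by simp [hb]) (by simp)]
    simp

end Mset

section Arch

variable {n : ℕ} {Q : Set (MvPolynomial (Fin n) ℝ)}

/-- boundedness w.r.t. a quadratic module -/
def Bdd (Q : Set (MvPolynomial (Fin n) ℝ)) (f : MvPolynomial (Fin n) ℝ) : Prop :=
  ∃ ℓ : ℝ, 0 ≤ ℓ ∧ C ℓ - f ∈ Q ∧ C ℓ + f ∈ Q

lemma Bdd.mono {Q' : Set (MvPolynomial (Fin n) ℝ)} (hQQ' : Q ⊆ Q') {f} (h : Bdd Q f) :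
    Bdd Q' f := by
  obtain ⟨ℓ, h0, h1, h2⟩ := h; exact ⟨ℓ, h0, hQQ' h1, hQQ' h2⟩

variable (hQ : IsQM Q)
include hQ

lemma Bdd.const (c : ℝ) : Bdd Q (C c) := by
  refine ⟨|c|, abs_nonneg c, ?_, ?_⟩
  · rw [← map_sub]; exact hQ.const_mem (by simp [abs_nonneg, sub_nonneg, neg_abs_le, le_abs_self])
  · rw [← map_add]; exact hQ.const_mem (by linarith [neg_abs_le c])

omit hQ in
lemma Bdd.neg {f} (h : Bdd Q f) : Bdd Q (-f) := by
  obtain ⟨ℓ, h0, h1, h2⟩ := h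
  exact ⟨ℓ, h0, by simpa [sub_neg_eq_add] using h2, by simpa [← sub_eq_add_neg] using h1⟩

lemma Bdd.add {f h : MvPolynomial (Fin n) ℝ} (hf : Bdd Q f) (hh : Bdd Q h) :
    Bdd Q (f + h) := by
  obtain ⟨ℓ, h0, h1, h2⟩ := hf
  obtain ⟨m, g0, g1, g2⟩ := hh
  refine ⟨ℓ + m, by linarith, ?_, ?_⟩
  · have := hQ.add_mem h1 g1; rw [map_add]; convert this using 1; ring
  · have := hQ.add_mem h2 g2; rw [map_add]; convert this using 1; ring

lemma Bdd.sq {f : MvPolynomial (Fin n) ℝ} (h : Bdd Q f) : Bdd Q (f ^ 2) := by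
  obtain ⟨ℓ, h0, h1, h2⟩ := h
  set t : ℝ := ℓ + 1 with ht
  have htpos : (0:ℝ) < t := by linarith
  have hts : C t - f ∈ Q := by
    have := hQ.add_mem h1 (hQ.const_mem (le_refl 0 |>.trans zero_le_one))
    convert this using 1
    rw [ht, map_add]; ring
  have hta : C t + f ∈ Q := by
    have := hQ.add_mem h2 (hQ.const_mem (le_refl 0 |>.trans zero_le_one))
    convert this using 1
    rw [ht, map_add]; ring
  have key : (C t - f)^2 * (C t + f) + (C t + f)^2 * (C t - f)
      = C (2*t) * (C (t^2) - f^2) := by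
    have e1 : (C (2*t) : MvPolynomial (Fin n) ℝ) = 2 * C t := by
      rw [map_mul, map_ofNat]
    have e2 : (C (t^2) : MvPolynomial (Fin n) ℝ) = (C t)^2 := by rw [map_pow]
    rw [e1, e2]; ring
  have hmem : C (2*t) * (C (t^2) - f^2) ∈ Q := by
    rw [← key]
    exact hQ.add_mem (hQ.sq_mul_mem _ hta) (hQ.sq_mul_mem _ hts)
  have hmem2 : C (t^2) - f^2 ∈ Q := by
    have := hQ.smul_mem (c := (2*t)⁻¹) (by positivity) hmem
    rwa [← mul_assoc, ← map_mul, inv_mul_cancel₀ (by positivity), map_one, one_mul] at this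
  refine ⟨t^2, by positivity, hmem2, ?_⟩
  exact hQ.add_mem (hQ.const_mem (by positivity)) (hQ.sq_mem f)

lemma Bdd.smul {c : ℝ} (hc : 0 ≤ c) {f} (h : Bdd Q f) : Bdd Q (C c * f) := by
  obtain ⟨ℓ, h0, h1, h2⟩ := h
  refine ⟨c * ℓ, mul_nonneg hc h0, ?_, ?_⟩
  · have := hQ.smul_mem hc h1
    convert this using 1; rw [map_mul]; ring
  · have := hQ.smul_mem hc h2
    convert this using 1; rw [map_mul]; ring

lemma Bdd.mul {f h : MvPolynomial (Fin n) ℝ} (hf : Bdd Q f) (hh : Bdd Q h) :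
    Bdd Q (f * h) := by
  have h1 : Bdd Q ((f + h) ^ 2) := (hf.add hQ hh).sq hQ
  have h2 : Bdd Q (-(f ^ 2)) := (hf.sq hQ).neg
  have h3 : Bdd Q (-(h ^ 2)) := (hh.sq hQ).neg
  have h4 : Bdd Q ((f+h)^2 + (-(f^2) + -(h^2))) := h1.add hQ (h2.add hQ h3)
  have h6 := h4.smul hQ (by norm_num : (0:ℝ) ≤ 1/2)
  have e : C (1/2:ℝ) * ((f+h)^2 + (-(f^2) + -(h^2))) = f * h := by
    have e2 : (C (1/2:ℝ) : MvPolynomial (Fin n) ℝ) * 2 = 1 := by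
      rw [← map_ofNat (C : ℝ →+* MvPolynomial (Fin n) ℝ) 2, ← map_mul]
      norm_num
    calc C (1/2:ℝ) * ((f+h)^2 + (-(f^2) + -(h^2))) = (C (1/2:ℝ) * 2) * (f*h) := by ring
      _ = f * h := by rw [e2, one_mul]
  rwa [e] at h6

lemma Bdd.var {N : ℝ} (hN : 0 ≤ N) (hNM : (C N - ∑ i, (X i : MvPolynomial (Fin n) ℝ) ^ 2) ∈ Q)
    (i : Fin n) : Bdd Q (X i : MvPolynomial (Fin n) ℝ) := by
  have half_two : ∀ y : MvPolynomial (Fin n) ℝ, C (1/2 : ℝ) * (2 * y) = y := by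
    intro y
    rw [← mul_assoc, show ((2 : MvPolynomial (Fin n) ℝ)) = C (2:ℝ) from (map_ofNat _ _).symm,
      ← map_mul]
    norm_num
  have hXi : (C N - (X i : MvPolynomial (Fin n) ℝ) ^ 2) ∈ Q := by
    have hrest : IsSOS (∑ j ∈ Finset.univ.erase i, (X j : MvPolynomial (Fin n) ℝ) ^ 2) := by
      classical
      refine ⟨(Finset.univ.erase i).val.map (fun j => (X j : MvPolynomial (Fin n) ℝ)), ?_⟩
      rw [Multiset.map_map]
      rfl
    have := hQ.add_mem hNM (hQ.sos_mem hrest)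
    convert this using 1
    rw [← Finset.add_sum_erase _ _ (Finset.mem_univ i)]
    ring
  have hsplit : (C (N+3) : MvPolynomial (Fin n) ℝ) = C N + 3 := by
    rw [map_add, map_ofNat]
  have hkey : ∀ e : MvPolynomial (Fin n) ℝ, e ^ 2 = 1 → C (N+3) + e * X i ∈ Q := by
    intro e he2
    have hS : ((X i : MvPolynomial (Fin n) ℝ) + e) ^ 2 + ((C N - X i ^ 2) + ((2:MvPolynomial (Fin n) ℝ) + C (N+3))) ∈ Q := by
      refine hQ.add_mem (hQ.sq_mem _) (hQ.add_mem hXi (hQ.add_mem ?_ (hQ.const_mem (by linarith))))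
      rw [show ((2 : MvPolynomial (Fin n) ℝ)) = C (2:ℝ) from (map_ofNat _ _).symm]
      exact hQ.const_mem (by norm_num)
    have hid : ((X i : MvPolynomial (Fin n) ℝ) + e) ^ 2 + ((C N - X i ^ 2) + ((2:MvPolynomial (Fin n) ℝ) + C (N+3)))
        = 2 * (C (N+3) + e * X i) := by
      rw [hsplit]
      linear_combination he2
    rw [hid] at hS
    have := hQ.smul_mem (c := (1/2 : ℝ)) (by norm_num) hS
    rwa [half_two] at this
  refine ⟨N + 3, by linarith, ?_, ?_⟩
  · have := hkey (-1) (by ring)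
    convert this using 1
    ring
  · have := hkey 1 (by ring)
    convert this using 1
    ring

lemma Bdd.all {N : ℝ} (hN : 0 ≤ N) (hNM : (C N - ∑ i, (X i : MvPolynomial (Fin n) ℝ) ^ 2) ∈ Q)
    (f : MvPolynomial (Fin n) ℝ) : Bdd Q f := by
  induction f using MvPolynomial.induction_on with
  | C a => exact Bdd.const hQ a
  | add p q hp hq => exact hp.add hQ hq
  | mul_X p i hp => exact hp.mul hQ (Bdd.var hQ hN hNM i)

end Arch

section Cert

variable {n : ℕ} {Q : Set (MvPolynomial (Fin n) ℝ)} (hQ : IsQM Q)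
include hQ

lemma IsQM.shift {f : MvPolynomial (Fin n) ℝ} {v w : ℝ} (h : C v + f ∈ Q) (hvw : v ≤ w) :
    C w + f ∈ Q := by
  have := hQ.add_mem (hQ.const_mem (sub_nonneg.2 hvw)) h
  convert this using 1
  rw [map_sub]; ring

lemma IsQM.of_nonpos_shift {f : MvPolynomial (Fin n) ℝ} {v : ℝ} (h : C v + f ∈ Q)
    (hv : v ≤ 0) : f ∈ Q := by
  have := hQ.add_mem (hQ.const_mem (neg_nonneg.2 hv)) h
  convert this using 1
  rw [map_neg]; ring

/-- the key certificate lemma: if `p * s = 1 + a` with `s` SOS and `a ∈ Q`,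
and every polynomial is bounded w.r.t. `Q`, then `p ∈ Q`. -/
lemma mem_of_cert (hBdd : ∀ f, Bdd Q f) {p s a : MvPolynomial (Fin n) ℝ}
    (hs : IsSOS s) (ha : a ∈ Q) (hcert : p * s = 1 + a) : p ∈ Q := by
  obtain ⟨l₀, hl₀0, -, hl₀⟩ := hBdd p
  obtain ⟨k₀, hk₀0, hk₀, -⟩ := hBdd s
  obtain ⟨c₂, hc₂0, hc₂, -⟩ := hBdd (s ^ 2)
  obtain ⟨c', hc'0, hc', -⟩ := hBdd (s + s * a)
  set K : ℝ := max k₀ (max 1 (l₀ * c₂ + c')) with hK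
  have hK1 : 1 ≤ K := le_max_of_le_right (le_max_left _ _)
  have hK0 : 0 < K := lt_of_lt_of_le one_pos hK1
  have hKk₀ : k₀ ≤ K := le_max_left _ _
  have hKc : l₀ * c₂ + c' ≤ K := le_max_of_le_right (le_max_right _ _)
  have hKs : C K - s ∈ Q := by
    have := hQ.add_mem (hQ.const_mem (sub_nonneg.2 hKk₀)) hk₀
    convert this using 1
    rw [map_sub]; ring
  -- one decrement step
  have step : ∀ l : ℝ, 0 ≤ l → l ≤ l₀ → C l + p ∈ Q → C (l - 1/K) + p ∈ Q := by
    intro l hl0 hll₀ hmem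
    have hmem' : p + C l ∈ Q := by rwa [add_comm]
    have hT : (C K - s) ^ 2 * (p + C l) + (C (2*K*l) * s +
        (C l * (C c₂ - s ^ 2) + ((C c' - (s + s * a)) + C (2*K) * a))) ∈ Q := by
      refine hQ.add_mem (hQ.sq_mul_mem _ hmem') (hQ.add_mem ?_ (hQ.add_mem ?_ (hQ.add_mem hc' ?_)))
      · exact hQ.smul_mem (by positivity) (hQ.sos_mem hs)
      · exact hQ.smul_mem hl0 hc₂
      · exact hQ.smul_mem (by positivity) ha
    have hid : (C K - s) ^ 2 * (p + C l) + (C (2*K*l) * s +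
        (C l * (C c₂ - s ^ 2) + ((C c' - (s + s * a)) + C (2*K) * a)))
        = C (K^2) * p + C (l*K^2 + l*c₂ + c' - 2*K) := by
      simp only [map_mul, map_add, map_sub, map_pow, map_ofNat]
      linear_combination (s - 2 * (C K : MvPolynomial (Fin n) ℝ)) * hcert
    rw [hid] at hT
    have hT2 := hQ.smul_mem (c := 1/K^2) (by positivity) hT
    have hid2 : C (1/K^2 : ℝ) * (C (K^2) * p + C (l*K^2 + l*c₂ + c' - 2*K))
        = C ((l*K^2 + l*c₂ + c' - 2*K)/K^2) + p := by
      rw [mul_add, ← mul_assoc, ← map_mul, ← map_mul,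
        show (1/K^2 * K^2 : ℝ) = 1 from by field_simp, map_one, one_mul,
        show (1/K^2 * (l*K^2 + l*c₂ + c' - 2*K) : ℝ) = (l*K^2 + l*c₂ + c' - 2*K)/K^2 from by ring,
        add_comm]
    rw [hid2] at hT2
    have hμ : (l*K^2 + l*c₂ + c' - 2*K)/K^2 ≤ l - 1/K := by
      rw [div_le_iff₀ (by positivity : (0:ℝ) < K^2)]
      have hlc : l*c₂ + c' ≤ K := le_trans (by nlinarith) hKc
      have he : (l - 1/K)*K^2 = l*K^2 - K := by field_simp
      rw [he]
      nlinarith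
    exact hQ.shift hT2 hμ
  -- iterate the decrement
  have iter : ∀ j : ℕ, p ∈ Q ∨ C (l₀ - j * (1/K)) + p ∈ Q := by
    intro j
    induction j with
    | zero => right; simpa using hl₀
    | succ j ih =>
      rcases ih with h | h
      · exact Or.inl h
      · by_cases hneg : l₀ - j * (1/K) ≤ 0
        · exact Or.inl (hQ.of_nonpos_shift h hneg)
        · push_neg at hneg
          have h0 : 0 ≤ l₀ - j * (1/K) := le_of_lt hneg
          have hle : l₀ - j * (1/K) ≤ l₀ := by
            have : (0:ℝ) ≤ j * (1/K) := by positivity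
            linarith
          have hstep := step _ h0 hle h
          right
          convert hstep using 2
          push_cast
          ring
  obtain ⟨j, hj⟩ := exists_nat_gt (l₀ * K)
  rcases iter j with h | h
  · exact h
  · refine hQ.of_nonpos_shift h ?_
    have : l₀ ≤ j * (1/K) := by
      rw [mul_one_div, le_div_iff₀ hK0]
      linarith
    linarith

end Cert

section State

variable {n : ℕ} {Q : Set (MvPolynomial (Fin n) ℝ)}

/-- the state associated to a quadratic module -/
noncomputable def alp (Q : Set (MvPolynomial (Fin n) ℝ)) (f : MvPolynomial (Fin n) ℝ) : ℝ :=
  sInf {r : ℝ | C r - f ∈ Q}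

variable (hQ : IsQM Q) (hproper : (-1 : MvPolynomial (Fin n) ℝ) ∉ Q)
  (hBdd : ∀ f, Bdd Q f)

include hQ

lemma IsQM.mem_upward {f : MvPolynomial (Fin n) ℝ} {r r' : ℝ} (h : C r - f ∈ Q)
    (hrr' : r ≤ r') : C r' - f ∈ Q := by
  have := hQ.add_mem (hQ.const_mem (sub_nonneg.2 hrr')) h
  convert this using 1
  rw [map_sub]; ring

include hproper

lemma IsQM.neg_const_not_mem {c : ℝ} (hc : c < 0) : (C c : MvPolynomial (Fin n) ℝ) ∉ Q := by
  intro h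
  have h2 := hQ.smul_mem (c := (-c)⁻¹) (inv_nonneg.2 (by linarith)) h
  rw [← map_mul] at h2
  have he : (-c)⁻¹ * c = -1 := by
    rw [inv_mul_eq_div, div_neg, div_self hc.ne]
  rw [he, map_neg, map_one] at h2
  exact hproper h2

include hBdd

lemma Sset_nonempty (f : MvPolynomial (Fin n) ℝ) : {r : ℝ | C r - f ∈ Q}.Nonempty := by
  obtain ⟨ℓ, _, h1, _⟩ := hBdd f
  exact ⟨ℓ, h1⟩

lemma Sset_bddBelow (f : MvPolynomial (Fin n) ℝ) : BddBelow {r : ℝ | C r - f ∈ Q} := by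
  obtain ⟨ℓ, _, _, h2⟩ := hBdd f
  refine ⟨-ℓ, fun r hr => ?_⟩
  by_contra hc
  push_neg at hc
  have : (C (r + ℓ) : MvPolynomial (Fin n) ℝ) ∈ Q := by
    have := hQ.add_mem hr h2
    convert this using 1
    rw [map_add]; ring
  exact hQ.neg_const_not_mem hproper (by linarith) this

lemma alp_le {f : MvPolynomial (Fin n) ℝ} {r : ℝ} (h : C r - f ∈ Q) : alp Q f ≤ r :=
  csInf_le (Sset_bddBelow hQ hproper hBdd f) h

lemma mem_of_alp_lt {f : MvPolynomial (Fin n) ℝ} {r : ℝ} (h : alp Q f < r) : C r - f ∈ Q := by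
  obtain ⟨r', hr', hlt⟩ := exists_lt_of_csInf_lt (Sset_nonempty hQ hproper hBdd f) h
  exact hQ.mem_upward hr' (le_of_lt hlt)

lemma alp_nonneg {f : MvPolynomial (Fin n) ℝ} (h : f ∈ Q) : 0 ≤ alp Q f := by
  refine le_csInf (Sset_nonempty hQ hproper hBdd f) fun r hr => ?_
  by_contra hc
  push_neg at hc
  have : (C r : MvPolynomial (Fin n) ℝ) ∈ Q := by
    have := hQ.add_mem hr h
    convert this using 1
    ring
  exact hQ.neg_const_not_mem hproper hc this

lemma alp_const (c : ℝ) : alp Q (C c) = c := by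
  refine le_antisymm (alp_le hQ hproper hBdd (by rw [sub_self]; exact hQ.zero_mem)) ?_
  refine le_csInf (Sset_nonempty hQ hproper hBdd _) fun r hr => ?_
  rw [Set.mem_setOf_eq, ← map_sub] at hr
  by_contra hc
  push_neg at hc
  exact hQ.neg_const_not_mem hproper (by linarith) hr

lemma alp_add_le (f g : MvPolynomial (Fin n) ℝ) : alp Q (f + g) ≤ alp Q f + alp Q g := by
  refine le_of_forall_pos_le_add fun ε hε => ?_
  have h1 : C (alp Q f + ε/2) - f ∈ Q := mem_of_alp_lt hQ hproper hBdd (by linarith)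
  have h2 : C (alp Q g + ε/2) - g ∈ Q := mem_of_alp_lt hQ hproper hBdd (by linarith)
  have h3 := hQ.add_mem h1 h2
  have he : (C (alp Q f + ε/2) - f) + (C (alp Q g + ε/2) - g)
      = C ((alp Q f + ε/2) + (alp Q g + ε/2)) - (f + g) := by
    simp only [map_add]
    ring
  rw [he] at h3
  have := alp_le hQ hproper hBdd h3
  linarith

variable (htot : ∀ f : MvPolynomial (Fin n) ℝ, f ∈ Q ∨ -f ∈ Q)
include htot

lemma alp_neg_add_self (f : MvPolynomial (Fin n) ℝ) : alp Q f + alp Q (-f) = 0 := by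
  have hge : 0 ≤ alp Q f + alp Q (-f) := by
    have key : ∀ r ∈ {r : ℝ | C r - f ∈ Q}, ∀ r' ∈ {r : ℝ | C r - (-f) ∈ Q}, 0 ≤ r + r' := by
      intro r hr r' hr'
      by_contra hc
      push_neg at hc
      have : (C (r + r') : MvPolynomial (Fin n) ℝ) ∈ Q := by
        have := hQ.add_mem hr hr'
        convert this using 1
        rw [map_add]; ring
      exact hQ.neg_const_not_mem hproper hc this
    have h1 : ∀ r ∈ {r : ℝ | C r - f ∈ Q}, -r ≤ alp Q (-f) := by
      intro r hr
      exact le_csInf (Sset_nonempty hQ hproper hBdd _) fun r' hr' => by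
        have := key r hr r' hr'; linarith
    have h2 : -alp Q (-f) ≤ alp Q f := by
      refine le_csInf (Sset_nonempty hQ hproper hBdd _) fun r hr => ?_
      have := h1 r hr; linarith
    linarith
  have hle : alp Q f + alp Q (-f) ≤ 0 := by
    by_contra hc
    push_neg at hc
    set δ := alp Q f + alp Q (-f) with hδ
    have hr : alp Q f - δ/2 < alp Q f := by linarith
    have hnm : C (alp Q f - δ/2) - f ∉ Q := by
      intro hmem
      exact absurd (alp_le hQ hproper hBdd hmem) (by linarith)
    have hmem : f - C (alp Q f - δ/2) ∈ Q := by
      rcases htot (C (alp Q f - δ/2) - f) with h | h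
      · exact absurd h hnm
      · rwa [neg_sub] at h
    have hmem' : C (-(alp Q f - δ/2)) - (-f) ∈ Q := by
      convert hmem using 1
      rw [map_neg]; ring
    have := alp_le hQ hproper hBdd hmem'
    have : alp Q (-f) ≤ -(alp Q f) + δ/2 := by linarith
    simp only [hδ] at this ⊢
    linarith
  linarith

lemma alp_neg (f : MvPolynomial (Fin n) ℝ) : alp Q (-f) = -alp Q f := by
  have := alp_neg_add_self hQ hproper hBdd htot f
  linarith

lemma alp_add (f g : MvPolynomial (Fin n) ℝ) : alp Q (f + g) = alp Q f + alp Q g := by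
  refine le_antisymm (alp_add_le hQ hproper hBdd f g) ?_
  have h1 : alp Q f ≤ alp Q (f + g) + alp Q (-g) := by
    have := alp_add_le hQ hproper hBdd (f + g) (-g)
    simpa using this
  have h2 := alp_neg hQ hproper hBdd htot g
  linarith

lemma alp_smul_le {c : ℝ} (hc : 0 ≤ c) (f : MvPolynomial (Fin n) ℝ) :
    alp Q (C c * f) ≤ c * alp Q f := by
  rcases eq_or_lt_of_le hc with h | h
  · subst h
    simp only [zero_mul]
    rw [show (C (0:ℝ) : MvPolynomial (Fin n) ℝ) * f = C (0:ℝ) from by rw [map_zero]; ring]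
    rw [alp_const hQ hproper hBdd]
  · refine le_of_forall_pos_le_add fun ε hε => ?_
    have hdiv : 0 < ε / c := div_pos hε h
    have h1 : C (alp Q f + ε/c) - f ∈ Q := mem_of_alp_lt hQ hproper hBdd (by linarith)
    have h2 := hQ.smul_mem hc h1
    have he : C c * (C (alp Q f + ε/c) - f) = C (c * alp Q f + ε) - C c * f := by
      rw [mul_sub, ← map_mul, mul_add, mul_div_cancel₀ _ (ne_of_gt h)]
    rw [he] at h2
    exact alp_le hQ hproper hBdd h2

lemma alp_smul {c : ℝ} (hc : 0 ≤ c) (f : MvPolynomial (Fin n) ℝ) :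
    alp Q (C c * f) = c * alp Q f := by
  rcases eq_or_lt_of_le hc with h | h
  · subst h
    simp only [zero_mul]
    rw [show (C (0:ℝ) : MvPolynomial (Fin n) ℝ) * f = C (0:ℝ) from by rw [map_zero]; ring]
    rw [alp_const hQ hproper hBdd]
  · refine le_antisymm (alp_smul_le hQ hproper hBdd htot hc f) ?_
    have h1 : alp Q (C c⁻¹ * (C c * f)) ≤ c⁻¹ * alp Q (C c * f) :=
      alp_smul_le hQ hproper hBdd htot (by positivity) _
    have he : C (c⁻¹ : ℝ) * (C c * f) = f := by
      rw [← mul_assoc, ← map_mul, inv_mul_cancel₀ (ne_of_gt h), map_one, one_mul]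
    rw [he] at h1
    have h2 : c * alp Q f ≤ c * (c⁻¹ * alp Q (C c * f)) := mul_le_mul_of_nonneg_left h1 hc
    rw [← mul_assoc, mul_inv_cancel₀ (ne_of_gt h), one_mul] at h2
    exact h2

lemma alp_sq (f : MvPolynomial (Fin n) ℝ) : alp Q (f ^ 2) = (alp Q f) ^ 2 := by
  set t := alp Q f with ht
  have hge : t ^ 2 ≤ alp Q (f ^ 2) := by
    have hsq : ((f - C t) ^ 2 : MvPolynomial (Fin n) ℝ) ∈ Q := hQ.sq_mem _
    have hnn := alp_nonneg hQ hproper hBdd hsq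
    have he : (f - C t) ^ 2 = f ^ 2 + (C (-(2*t)) * f + C (t^2)) := by
      rw [map_neg, map_mul, map_ofNat, map_pow]
      ring
    rw [he] at hnn
    rw [alp_add hQ hproper hBdd htot, alp_add hQ hproper hBdd htot,
      alp_const hQ hproper hBdd] at hnn
    have hsm : alp Q (C (-(2*t)) * f) = -(2*t) * alp Q f := by
      rcases le_or_gt 0 t with h | h
      · have : C (-(2*t)) * f = C (2*t) * (-f) := by rw [map_neg]; ring
        rw [this, alp_smul hQ hproper hBdd htot (by linarith),
          alp_neg hQ hproper hBdd htot]
        ring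
      · rw [alp_smul hQ hproper hBdd htot (by linarith)]
    rw [hsm] at hnn
    nlinarith [hnn]
  have hle : alp Q (f ^ 2) ≤ t ^ 2 := by
    have key : ∀ u : ℝ, |t| < u → alp Q (f ^ 2) ≤ u ^ 2 := by
      intro u hu
      have hu0 : 0 < u := lt_of_le_of_lt (abs_nonneg t) hu
      have h1 : C u - f ∈ Q := mem_of_alp_lt hQ hproper hBdd (by
        have := le_abs_self t; linarith)
      have h2 : C u + f ∈ Q := by
        have h2' : C u - (-f) ∈ Q := mem_of_alp_lt hQ hproper hBdd (by
          rw [alp_neg hQ hproper hBdd htot]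
          have := neg_abs_le t; linarith)
        rwa [sub_neg_eq_add] at h2'
      have hkey : (C u - f)^2 * (C u + f) + (C u + f)^2 * (C u - f)
          = C (2*u) * (C (u^2) - f^2) := by
        rw [map_mul, map_ofNat, map_pow]
        ring
      have hmem : C (2*u) * (C (u^2) - f^2) ∈ Q := by
        rw [← hkey]
        exact hQ.add_mem (hQ.sq_mul_mem _ h2) (hQ.sq_mul_mem _ h1)
      have hmem2 : C (u^2) - f^2 ∈ Q := by
        have := hQ.smul_mem (c := (2*u)⁻¹) (by positivity) hmem
        rwa [← mul_assoc, ← map_mul, inv_mul_cancel₀ (by positivity), map_one, one_mul] at this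
      exact alp_le hQ hproper hBdd hmem2
    refine le_of_forall_pos_le_add fun ε hε => ?_
    have hs : 0 < min 1 (ε / (2 * |t| + 1)) := by positivity
    have h := key (|t| + min 1 (ε / (2 * |t| + 1))) (by linarith)
    have habs : |t|^2 = t^2 := sq_abs t
    have hmin1 : min 1 (ε / (2 * |t| + 1)) ≤ 1 := min_le_left _ _
    have hmin2 : min 1 (ε / (2 * |t| + 1)) ≤ ε / (2 * |t| + 1) := min_le_right _ _
    have habs0 : 0 ≤ |t| := abs_nonneg t
    have hd : min 1 (ε / (2 * |t| + 1)) * (2 * |t| + 1) ≤ ε := by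
      rw [← le_div_iff₀ (by positivity)]
      exact hmin2
    nlinarith [h, hs]
  linarith

lemma alp_mul (f g : MvPolynomial (Fin n) ℝ) : alp Q (f * g) = alp Q f * alp Q g := by
  have hid : f * g = C (1/2 : ℝ) * ((f + g)^2 + (-(f^2) + -(g^2))) := by
    have e2 : (C (1/2:ℝ) : MvPolynomial (Fin n) ℝ) * 2 = 1 := by
      rw [← map_ofNat (C : ℝ →+* MvPolynomial (Fin n) ℝ) 2, ← map_mul]
      norm_num
    calc f * g = (C (1/2:ℝ) * 2) * (f * g) := by rw [e2, one_mul]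
      _ = C (1/2 : ℝ) * ((f + g)^2 + (-(f^2) + -(g^2))) := by ring
  rw [hid, alp_smul hQ hproper hBdd htot (by norm_num),
    alp_add hQ hproper hBdd htot, alp_add hQ hproper hBdd htot,
    alp_neg hQ hproper hBdd htot, alp_neg hQ hproper hBdd htot,
    alp_sq hQ hproper hBdd htot, alp_sq hQ hproper hBdd htot,
    alp_sq hQ hproper hBdd htot, alp_add hQ hproper hBdd htot]
  ring

lemma alp_eq_eval (f : MvPolynomial (Fin n) ℝ) :
    alp Q f = eval (fun i => alp Q (X i)) f := by
  induction f using MvPolynomial.induction_on with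
  | C a => rw [alp_const hQ hproper hBdd, eval_C]
  | add p q hp hq => rw [alp_add hQ hproper hBdd htot, eval_add, hp, hq]
  | mul_X p i hp => rw [alp_mul hQ hproper hBdd htot, eval_mul, eval_X, hp]

end State

end PutinarAux

open PutinarAux in
/-- **Putinar's Positivstellensatz.** -/
theorem putinar_positivstellensatz {n k : ℕ} (g : Fin k → MvPolynomial (Fin n) ℝ)
    (X : Set (Fin n → ℝ)) (hX : X = {x | ∀ i, 0 ≤ MvPolynomial.eval x (g i)})
    (N : ℝ) (hN : 0 ≤ N) (d₀ : ℕ) (hd₀ : 0 < d₀)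
    (hArch : (MvPolynomial.C N - ∑ i, MvPolynomial.X i ^ 2) ∈ QModule g d₀)
    (p : MvPolynomial (Fin n) ℝ)
    (hp : ∀ x ∈ X, 0 < MvPolynomial.eval x p) :
    ∃ d : ℕ, p ∈ QModule g d := by
  classical
  have hQM : IsQM (Mset g) := isQM_Mset g
  have hNM : (C N - ∑ i, (MvPolynomial.X i : MvPolynomial (Fin n) ℝ) ^ 2) ∈ Mset g :=
    QModule_subset_Mset g d₀ hArch
  have hBddM : ∀ f, Bdd (Mset g) f := fun f => Bdd.all hQM hN hNM f
  -- the quadratic module generated by `M` and `-p`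
  set M' : Set (MvPolynomial (Fin n) ℝ) :=
    {f | ∃ a s, a ∈ Mset g ∧ IsSOS s ∧ f = a + (-p) * s} with hM'def
  have hM'QM : IsQM M' := by
    constructor
    · rintro a b ⟨a₁, s₁, ha₁, hs₁, rfl⟩ ⟨a₂, s₂, ha₂, hs₂, rfl⟩
      exact ⟨a₁ + a₂, s₁ + s₂, hQM.add_mem ha₁ ha₂, hs₁.add hs₂, by ring⟩
    · rintro f a ⟨a₁, s₁, ha₁, hs₁, rfl⟩
      exact ⟨f ^ 2 * a₁, f ^ 2 * s₁, hQM.sq_mul_mem f ha₁, hs₁.sq_mul f, by ring⟩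
    · intro f
      exact ⟨f ^ 2, 0, hQM.sq_mem f, IsSOS.zero, by ring⟩
  have hMM' : Mset g ⊆ M' := fun a ha => ⟨a, 0, ha, IsSOS.zero, by ring⟩
  by_cases hcase : (-1 : MvPolynomial (Fin n) ℝ) ∈ M'
  · -- certificate case
    obtain ⟨a, s, ha, hs, heq⟩ := hcase
    have hcert : p * s = 1 + a := by linear_combination heq
    exact Mset_subset_union g (mem_of_cert hQM hBddM hs ha hcert)
  · exfalso
    -- Zorn's lemma: a maximal proper quadratic module extending `M'`
    set 𝒮 : Set (Set (MvPolynomial (Fin n) ℝ)) :=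
      {R | IsQM R ∧ (-1 : MvPolynomial (Fin n) ℝ) ∉ R} with h𝒮def
    have hchain : ∀ c ⊆ 𝒮, IsChain (· ⊆ ·) c → c.Nonempty →
        ∃ ub ∈ 𝒮, ∀ s ∈ c, s ⊆ ub := by
      intro c hc𝒮 hchain ⟨R₀, hR₀⟩
      refine ⟨⋃₀ c, ⟨?_, ?_⟩, fun s hs => Set.subset_sUnion_of_mem hs⟩
      · constructor
        · rintro a b ⟨R₁, hR₁, ha⟩ ⟨R₂, hR₂, hb⟩
          rcases hchain.total hR₁ hR₂ with h | h
          · exact ⟨R₂, hR₂, (hc𝒮 hR₂).1.add_mem (h ha) hb⟩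
          · exact ⟨R₁, hR₁, (hc𝒮 hR₁).1.add_mem ha (h hb)⟩
        · rintro f a ⟨R₁, hR₁, ha⟩
          exact ⟨R₁, hR₁, (hc𝒮 hR₁).1.sq_mul_mem f ha⟩
        · intro f
          exact ⟨R₀, hR₀, (hc𝒮 hR₀).1.sq_mem f⟩
      · rintro ⟨R₁, hR₁, hmem⟩
        exact (hc𝒮 hR₁).2 hmem
    obtain ⟨Q, hM'Q, hQmax⟩ := zorn_subset_nonempty 𝒮 hchain M' ⟨hM'QM, hcase⟩
    obtain ⟨hQisQM, hQproper⟩ := hQmax.prop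
    have hMQ : Mset g ⊆ Q := subset_trans hMM' hM'Q
    have hBddQ : ∀ f, Bdd Q f := fun f => (hBddM f).mono hMQ
    -- totality of the maximal module
    have htot : ∀ f : MvPolynomial (Fin n) ℝ, f ∈ Q ∨ -f ∈ Q := by
      intro a
      by_contra hcon
      push_neg at hcon
      obtain ⟨ha1, ha2⟩ := hcon
      have hext : ∀ b : MvPolynomial (Fin n) ℝ, b ∉ Q →
          (-1 : MvPolynomial (Fin n) ℝ) ∈ {f | ∃ q s, q ∈ Q ∧ IsSOS s ∧ f = q + b * s} := by
        intro b hb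
        set Q1 : Set (MvPolynomial (Fin n) ℝ) :=
          {f | ∃ q s, q ∈ Q ∧ IsSOS s ∧ f = q + b * s} with hQ1def
        have hQ1QM : IsQM Q1 := by
          constructor
          · rintro x y ⟨q₁, s₁, hq₁, hs₁, rfl⟩ ⟨q₂, s₂, hq₂, hs₂, rfl⟩
            exact ⟨q₁ + q₂, s₁ + s₂, hQisQM.add_mem hq₁ hq₂, hs₁.add hs₂, by ring⟩
          · rintro f x ⟨q₁, s₁, hq₁, hs₁, rfl⟩
            exact ⟨f ^ 2 * q₁, f ^ 2 * s₁, hQisQM.sq_mul_mem f hq₁, hs₁.sq_mul f, by ring⟩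
          · intro f
            exact ⟨f ^ 2, 0, hQisQM.sq_mem f, IsSOS.zero, by ring⟩
        have hQQ1 : Q ⊆ Q1 := fun x hx => ⟨x, 0, hx, IsSOS.zero, by ring⟩
        by_contra hno
        have hQ1mem : Q1 ∈ 𝒮 := ⟨hQ1QM, hno⟩
        have : Q1 = Q := subset_antisymm (hQmax.le_of_ge hQ1mem hQQ1) hQQ1
        exact hb (this ▸ ⟨0, 1, hQisQM.zero_mem, IsSOS.one, by ring⟩)
      obtain ⟨q₁, σ₁, hq₁, hσ₁, he₁⟩ := hext a ha1
      obtain ⟨q₂, σ₂, hq₂, hσ₂, he₂⟩ := hext (-a) ha2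
      -- from the two representations of -1 deduce -σ₁ ∈ Q
      have hzero : -σ₁ = σ₂ + (σ₁ * q₂ + σ₂ * q₁) := by
        linear_combination σ₂ * he₁ + σ₁ * he₂
      have hnegσ₁ : -σ₁ ∈ Q := by
        rw [hzero]
        exact hQisQM.add_mem (hQisQM.sos_mem hσ₂)
          (hQisQM.add_mem (hQisQM.sos_mul_mem hσ₁ hq₂) (hQisQM.sos_mul_mem hσ₂ hq₁))
      have hfin : a * σ₁ ∈ Q := hQisQM.supp_mul_mem (hQisQM.sos_mem hσ₁) hnegσ₁ a
      have hneg1 : (-1 : MvPolynomial (Fin n) ℝ) ∈ Q := by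
        have := hQisQM.add_mem hq₁ hfin
        have he : q₁ + a * σ₁ = -1 := by linear_combination -he₁
        rwa [he] at this
      exact hQproper hneg1
    -- the state gives a point of `X` where `p ≤ 0`
    set x₀ : Fin n → ℝ := fun i => alp Q (MvPolynomial.X i) with hx₀def
    have hx₀X : x₀ ∈ X := by
      rw [hX]
      intro i
      have hgQ : g i ∈ Q := hMQ (g_mem_Mset g i)
      have h0 := alp_nonneg hQisQM hQproper hBddQ hgQ
      rwa [alp_eq_eval hQisQM hQproper hBddQ htot] at h0
    have hnegp : (-p : MvPolynomial (Fin n) ℝ) ∈ Q :=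
      hM'Q ⟨0, 1, hQM.zero_mem, IsSOS.one, by ring⟩
    have h1 := alp_nonneg hQisQM hQproper hBddQ hnegp
    rw [alp_eq_eval hQisQM hQproper hBddQ htot, map_neg] at h1
    have h2 := hp x₀ hx₀X
    linarith
end

section
/- Let g_1, …, g_k ∈ ℝ[x_1,…,x_n], let X = {x ∈ ℝⁿ : g_i(x) ≥ 0, i = 1,…,k}, and suppose there exist N ≥ 0 and d_0 > 0 such that N − ‖x‖² ∈ Q_{d_0}(X) (in particular X is compact). Then for every continuous function f : X → ℝ with f ≥ 0 on X and every ε > 0, there exist d ≥ 0 and a polynomial p ∈ Q_d(X) such that sup_{x ∈ X} |f(x) − p(x)| < ε. -/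
open MvPolynomial

lemma SOSdeg_zero_mem {n m : ℕ} : (0 : MvPolynomial (Fin n) ℝ) ∈ SOSdeg m :=
  ⟨0, by simp, by simp⟩

lemma SOSdeg_eval_nonneg {n m : ℕ} {p : MvPolynomial (Fin n) ℝ} (hp : p ∈ SOSdeg m)
    (x : Fin n → ℝ) : 0 ≤ eval x p := by
  obtain ⟨s, -, rfl⟩ := hp
  rw [map_multiset_sum]
  refine Multiset.sum_nonneg ?_
  intro a ha
  simp only [Multiset.map_map, Multiset.mem_map, Function.comp] at ha
  obtain ⟨q, -, rfl⟩ := ha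
  simpa using sq_nonneg (eval x q)

lemma QModule_eval_nonneg {n k : ℕ} {g : Fin k → MvPolynomial (Fin n) ℝ} {d : ℕ}
    {p : MvPolynomial (Fin n) ℝ} (hp : p ∈ QModule g d) (x : Fin n → ℝ)
    (hx : ∀ i, 0 ≤ eval x (g i)) : 0 ≤ eval x p := by
  obtain ⟨s₀, s, hs₀, hs, rfl⟩ := hp
  simp only [map_add, map_sum, map_mul]
  have h1 : 0 ≤ ∑ i, eval x (g i) * eval x (s i) :=
    Finset.sum_nonneg fun i _ => mul_nonneg (hx i) (SOSdeg_eval_nonneg (hs i) x)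
  have h2 := SOSdeg_eval_nonneg hs₀ x
  linarith

def coordCM {n : ℕ} (X : Set (Fin n → ℝ)) (i : Fin n) : C(X, ℝ) :=
  ⟨fun x => (x : Fin n → ℝ) i, (continuous_apply i).comp continuous_subtype_val⟩

/-- Density of truncated quadratic module elements among continuous functions
nonnegative on `X` (Corollary of Putinar's Positivstellensatz and Stone–Weierstrass). -/
theorem qmodule_dense_in_nonneg_continuous {n k : ℕ} (g : Fin k → MvPolynomial (Fin n) ℝ)
    (X : Set (Fin n → ℝ)) (hX : X = {x | ∀ i, 0 ≤ MvPolynomial.eval x (g i)})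
    (N : ℝ) (hN : 0 ≤ N) (d₀ : ℕ) (hd₀ : 0 < d₀)
    (hArch : (MvPolynomial.C N - ∑ i, MvPolynomial.X i ^ 2) ∈ QModule g d₀)
    (f : (Fin n → ℝ) → ℝ) (hf : ContinuousOn f X) (hf0 : ∀ x ∈ X, 0 ≤ f x)
    (ε : ℝ) (hε : 0 < ε) :
    ∃ d : ℕ, ∃ p ∈ QModule g d, ∀ x ∈ X, |f x - MvPolynomial.eval x p| < ε := by
  -- trivial case: X empty
  by_cases hne : X.Nonempty
  swap
  · refine ⟨0, 0, ⟨0, 0, SOSdeg_zero_mem, fun i => SOSdeg_zero_mem, by simp⟩, ?_⟩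
    intro x hx; exact absurd ⟨x, hx⟩ hne
  -- X is compact
  have hgx : ∀ x ∈ X, ∀ i, 0 ≤ eval x (g i) := by intro x hx; rw [hX] at hx; exact hx
  have hbd : ∀ x ∈ X, ∑ i, (x i) ^ 2 ≤ N := by
    intro x hx
    have := QModule_eval_nonneg hArch x (hgx x hx)
    simp only [map_sub, eval_C, map_sum, map_pow, eval_X] at this
    linarith
  have hclosed : IsClosed X := by
    rw [hX]
    have : {x : Fin n → ℝ | ∀ i, 0 ≤ eval x (g i)} = ⋂ i, {x | 0 ≤ eval x (g i)} := by
      ext; simp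
    rw [this]
    exact isClosed_iInter fun i => isClosed_le continuous_const (MvPolynomial.continuous_eval _)
  have hXc : IsCompact X := by
    refine (isCompact_closedBall (0 : Fin n → ℝ) (Real.sqrt N)).of_isClosed_subset hclosed ?_
    intro x hx
    rw [Metric.mem_closedBall, dist_zero_right]
    refine (pi_norm_le_iff_of_nonneg (Real.sqrt_nonneg N)).2 fun i => ?_
    rw [Real.norm_eq_abs, ← Real.sqrt_sq_eq_abs]
    refine Real.sqrt_le_sqrt ?_
    calc (x i) ^ 2 ≤ ∑ j, (x j) ^ 2 :=
          Finset.single_le_sum (fun j _ => sq_nonneg (x j)) (Finset.mem_univ i)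
      _ ≤ N := hbd x hx
  haveI : CompactSpace X := isCompact_iff_compactSpace.mp hXc
  haveI : Nonempty X := hne.to_subtype
  -- bound on f
  obtain ⟨x₀, hx₀X, hx₀'⟩ := hXc.exists_isMaxOn hne hf
  have hx₀ : ∀ x ∈ X, f x ≤ f x₀ := hx₀'
  set M : ℝ := Real.sqrt (f x₀) with hM
  have hMnn : 0 ≤ M := Real.sqrt_nonneg _
  have hfM : ∀ x ∈ X, Real.sqrt (f x) ≤ M := fun x hx => Real.sqrt_le_sqrt (hx₀ x hx)
  -- choose δ
  set δ : ℝ := min 1 (ε / (2 * M + 2)) with hδ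
  have hδpos : 0 < δ := lt_min one_pos (div_pos hε (by linarith))
  have hδ1 : δ ≤ 1 := min_le_left _ _
  have hδε : δ * (2 * M + 2) ≤ ε := by
    have := min_le_right 1 (ε / (2 * M + 2))
    calc δ * (2 * M + 2) ≤ (ε / (2 * M + 2)) * (2 * M + 2) := by nlinarith
      _ = ε := by field_simp
  -- Stone–Weierstrass for sqrt ∘ f
  set A : Subalgebra ℝ C(X, ℝ) :=
    (MvPolynomial.aeval fun i : Fin n =>
      coordCM X i :
        MvPolynomial (Fin n) ℝ →ₐ[ℝ] C(X, ℝ)).range with hA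
  have hAsep : A.SeparatesPoints := by
    intro x y hxy
    have : ∃ i, (x : Fin n → ℝ) i ≠ (y : Fin n → ℝ) i := by
      by_contra h
      push_neg at h
      exact hxy (Subtype.ext (funext h))
    obtain ⟨i, hi⟩ := this
    refine ⟨_, ⟨_, ⟨MvPolynomial.X i, rfl⟩, rfl⟩, ?_⟩
    simpa [coordCM] using hi
  have hFc : Continuous fun x : X => Real.sqrt (f x) :=
    Real.continuous_sqrt.comp hf.restrict
  obtain ⟨⟨r', hr'⟩, hrb⟩ :=
    ContinuousMap.exists_mem_subalgebra_near_continuous_of_separatesPoints A hAsep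
      (fun x : X => Real.sqrt (f x)) hFc δ hδpos
  obtain ⟨r, rfl⟩ := hr'
  simp only [AlgHom.toRingHom_eq_coe, RingHom.coe_coe] at hrb
  -- evaluation of the continuous map
  have hrev : ∀ x : X, (MvPolynomial.aeval fun i : Fin n =>
      coordCM X i) r x
        = eval (x : Fin n → ℝ) r := by
    intro x
    rw [show ((MvPolynomial.aeval fun i : Fin n => coordCM X i) r) x
        = (ContinuousMap.evalAlgHom ℝ ℝ x) ((MvPolynomial.aeval fun i : Fin n => coordCM X i) r)
      from rfl, MvPolynomial.comp_aeval_apply]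
    simp only [ContinuousMap.evalAlgHom_apply, coordCM, ContinuousMap.coe_mk]
    rw [← MvPolynomial.coe_aeval_eq_eval]
    rfl
  -- conclusion
  refine ⟨2 * r.totalDegree, r ^ 2,
    ⟨r ^ 2, 0, ⟨{r}, by simp, by simp⟩, fun i => SOSdeg_zero_mem, by simp⟩, ?_⟩
  intro x hx
  have hb := hrb ⟨x, hx⟩
  rw [hrev ⟨x, hx⟩] at hb
  set a : ℝ := Real.sqrt (f x) with ha
  set b : ℝ := eval x r with hbdef
  have hfa : f x = a ^ 2 := (Real.sq_sqrt (hf0 x hx)).symm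
  have hann : 0 ≤ a := Real.sqrt_nonneg _
  have haM : a ≤ M := hfM x hx
  have hab : |b - a| < δ := by rwa [Real.norm_eq_abs] at hb
  rw [abs_sub_lt_iff] at hab
  rw [map_pow, hfa, ← hbdef, abs_lt]
  constructor <;> nlinarith [sq_nonneg (a - b), sq_nonneg (a + b), sq_nonneg b]
end

section
/- Let f̄ : ℝⁿ → ℝⁿ be globally Lipschitz with flow φ, let β > 0, and let w : ℝⁿ → ℝ be continuously differentiable with compact support. Then for every x_0 ∈ ℝⁿ the integral v(x_0) := −∫_0^∞ e^{−βt} w(φ(t, x_0)) dt converges, and for every x_0 ∈ ℝⁿ the map t ↦ v(φ(t, x_0)) is differentiable on [0,∞) with derivative equal to β·v(φ(t, x_0)) + w(φ(t, x_0)) at every t ≥ 0. In particular v solves the equation ∇v·f̄ − βv = w along every trajectory of the flow. -/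
open MeasureTheory Set

/-- For a globally Lipschitz vector field `f` with flow `φ`, discount factor `β > 0` and
a compactly supported `C¹` function `w`, the integral `v(x₀) = -∫₀^∞ e^{-βt} w(φ(t,x₀)) dt`
converges, and `t ↦ v(φ(t,x₀))` is differentiable on `[0,∞)` with derivative
`β v(φ(t,x₀)) + w(φ(t,x₀))`; in particular `v` solves `∇v·f - βv = w` along trajectories. -/
theorem discounted_transport_solution {n : ℕ}
    (f : (Fin n → ℝ) → (Fin n → ℝ)) (K : NNReal) (hf : LipschitzWith K f)
    (φ : ℝ → (Fin n → ℝ) → (Fin n → ℝ))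
    (hφ0 : ∀ x, φ 0 x = x)
    (hφ : ∀ x, ∀ t ∈ Ici (0:ℝ), HasDerivWithinAt (fun s => φ s x) (f (φ t x)) (Ici 0) t)
    (β : ℝ) (hβ : 0 < β)
    (w : (Fin n → ℝ) → ℝ) (hw : ContDiff ℝ 1 w) (hwc : HasCompactSupport w)
    (x₀ : Fin n → ℝ) :
    IntegrableOn (fun t => Real.exp (-β * t) * w (φ t x₀)) (Ici 0) ∧
      ∀ t ∈ Ici (0:ℝ),
        HasDerivWithinAt
          (fun s => -(∫ r in Ici (0:ℝ), Real.exp (-β * r) * w (φ r (φ s x₀))))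
          (β * (-(∫ r in Ici (0:ℝ), Real.exp (-β * r) * w (φ r (φ t x₀)))) + w (φ t x₀))
          (Ici 0) t := by
  have hwcont : Continuous w := hw.continuous
  -- continuity of trajectories
  have hcont : ∀ x, ContinuousOn (fun u => φ u x) (Ici (0:ℝ)) :=
    fun x u hu => (hφ x u hu).continuousWithinAt
  set h : ℝ → ℝ := fun u => Real.exp (-β * u) * w (φ u x₀) with hh
  have hhcont : ContinuousOn h (Ici (0:ℝ)) := by
    exact ((Real.continuous_exp.comp (continuous_const.mul continuous_id)).continuousOn).mul
      (hwcont.comp_continuousOn (hcont x₀))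
  -- integrability of h on [0,∞)
  obtain ⟨C, hC⟩ := hwc.exists_bound_of_continuous hwcont
  have hint : IntegrableOn h (Ici (0:ℝ)) := by
    have hig : IntegrableOn (fun u => C * Real.exp (-β * u)) (Ici (0:ℝ)) := by
      rw [integrableOn_Ici_iff_integrableOn_Ioi]
      exact (exp_neg_integrableOn_Ioi 0 hβ).const_mul C
    refine Integrable.mono' hig (hhcont.aestronglyMeasurable measurableSet_Ici) (ae_of_all _ ?_)
    intro u
    have h1 : ‖h u‖ = Real.exp (-β * u) * ‖w (φ u x₀)‖ := by
      rw [hh]; simp [norm_mul, Real.abs_exp]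
    rw [h1, mul_comm C]
    exact mul_le_mul_of_nonneg_left (hC _) (Real.exp_pos _).le
  -- the semigroup property, from uniqueness of ODE solutions
  have hsg : ∀ s ∈ Ici (0:ℝ), ∀ r ∈ Ici (0:ℝ), φ r (φ s x₀) = φ (r + s) x₀ := by
    intro s hs r hr
    have hs0 : (0:ℝ) ≤ s := hs
    have hr0 : (0:ℝ) ≤ r := hr
    have key : EqOn (fun u => φ u (φ s x₀)) (fun u => φ (u + s) x₀) (Icc 0 r) := by
      refine ODE_solution_unique (v := fun _ => f) (fun _ => hf) ?_ ?_ ?_ ?_ ?_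
      · exact (hcont (φ s x₀)).mono Icc_subset_Ici_self
      · intro u hu
        exact (hφ (φ s x₀) u hu.1).mono (Ici_subset_Ici.2 hu.1)
      · refine ((hcont x₀).comp (continuous_id.add continuous_const).continuousOn ?_).mono
          Icc_subset_Ici_self
        intro u hu
        exact add_nonneg hu hs0
      · intro u hu
        have hd := hφ x₀ (u + s) (add_nonneg hu.1 hs0)
        have hmt : MapsTo (fun a : ℝ => a + s) (Ici u) (Ici (0:ℝ)) := by
          intro a ha
          exact add_nonneg (le_trans hu.1 ha) hs0
        have hcomp := HasDerivWithinAt.scomp (𝕜 := ℝ) u hd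
          ((hasDerivAt_id u).add_const s).hasDerivWithinAt hmt
        simpa [Function.comp_def] using hcomp
      · simp [hφ0, zero_add]
    have := key ⟨hr0, le_rfl⟩
    simpa using this
  -- translation identity
  have Dkey : ∀ s ∈ Ici (0:ℝ),
      (∫ r in Ici (0:ℝ), Real.exp (-β * r) * w (φ r (φ s x₀)))
        = Real.exp (β * s) * ∫ u in Ici s, h u := by
    intro s hs
    have hs0 : (0:ℝ) ≤ s := hs
    have e1 : (∫ r in Ici (0:ℝ), Real.exp (-β * r) * w (φ r (φ s x₀)))
        = ∫ r, Real.exp (β * s) * (Ici s).indicator h (r + s) := by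
      rw [← integral_indicator measurableSet_Ici]
      congr 1
      funext r
      by_cases hr : (0:ℝ) ≤ r
      · rw [indicator_of_mem (show r ∈ Ici (0:ℝ) from hr),
          indicator_of_mem (show r + s ∈ Ici s from le_add_of_nonneg_left hr)]
        rw [hsg s hs r hr, hh]
        have : Real.exp (β * s) * Real.exp (-β * (r + s)) = Real.exp (-β * r) := by
          rw [← Real.exp_add]; ring_nf
        rw [← mul_assoc, this]
      · rw [indicator_of_notMem (show r ∉ Ici (0:ℝ) from hr),
          indicator_of_notMem (show r + s ∉ Ici s from fun hmem => hr (by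
            have := mem_Ici.1 hmem; linarith)), mul_zero]
    rw [e1, integral_const_mul]
    congr 1
    rw [integral_add_right_eq_self ((Ici s).indicator h) s, integral_indicator measurableSet_Ici]
  -- splitting the integral
  have Ekey : ∀ s ∈ Ici (0:ℝ),
      (∫ u in Ici s, h u) = (∫ u in Ici (0:ℝ), h u) - ∫ u in (0:ℝ)..s, h u := by
    intro s hs
    have hs0 : (0:ℝ) ≤ s := hs
    have hdisj : Disjoint (Ico (0:ℝ) s) (Ici s) := by
      refine Set.disjoint_left.2 ?_
      intro a ha ha'
      exact absurd (mem_Ici.1 ha') (not_le.2 ha.2)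
    have hsplit : (∫ u in Ici (0:ℝ), h u)
        = (∫ u in Ico (0:ℝ) s, h u) + ∫ u in Ici s, h u := by
      rw [← setIntegral_union hdisj measurableSet_Ici
        (hint.mono_set (fun a ha => ha.1))
        (hint.mono_set (fun a ha => le_trans hs0 ha : Ici s ⊆ Ici 0)),
        Ico_union_Ici_eq_Ici hs0]
    have hIco : (∫ u in Ico (0:ℝ) s, h u) = ∫ u in (0:ℝ)..s, h u := by
      rw [intervalIntegral.integral_of_le hs0, integral_Ico_eq_integral_Ioo,
        integral_Ioc_eq_integral_Ioo]
    rw [hsplit, hIco]; ring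
  -- FTC
  have hFTC : ∀ t ∈ Ici (0:ℝ),
      HasDerivWithinAt (fun s => ∫ u in (0:ℝ)..s, h u) (h t) (Ici 0) t := by
    intro t ht
    have ht0 : (0:ℝ) ≤ t := ht
    have hii : IntervalIntegrable h volume 0 t := by
      refine (hint.mono_set ?_).intervalIntegrable
      rw [uIcc_of_le ht0]
      exact Icc_subset_Ici_self
    rcases eq_or_lt_of_le ht0 with rfl | htpos
    · exact intervalIntegral.integral_hasDerivWithinAt_right (t := Ioi (0:ℝ)) hii
        ⟨Ici 0, Filter.mem_of_superset self_mem_nhdsWithin Ioi_subset_Ici_self,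
          hint.aestronglyMeasurable⟩
        ((hhcont 0 Set.self_mem_Ici).mono Ioi_subset_Ici_self)
    · have hmem : Ici (0:ℝ) ∈ nhds t := Ici_mem_nhds htpos
      have hca : ContinuousAt h t := hhcont.continuousAt hmem
      exact (intervalIntegral.integral_hasDerivAt_right hii
        ⟨Ici 0, hmem, hint.aestronglyMeasurable⟩ hca).hasDerivWithinAt
  refine ⟨hint, ?_⟩
  intro t ht
  have ht0 : (0:ℝ) ≤ t := ht
  set C₀ : ℝ := ∫ u in Ici (0:ℝ), h u with hC₀
  set G : ℝ → ℝ := fun s => -(Real.exp (β * s) * (C₀ - ∫ u in (0:ℝ)..s, h u)) with hG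
  have keyEq : ∀ s ∈ Ici (0:ℝ),
      -(∫ r in Ici (0:ℝ), Real.exp (-β * r) * w (φ r (φ s x₀))) = G s := by
    intro s hs
    rw [Dkey s hs, Ekey s hs]
  -- derivative of G
  have hA : HasDerivWithinAt (fun s => Real.exp (β * s)) (β * Real.exp (β * t)) (Ici 0) t := by
    have := (((hasDerivAt_id t).const_mul β).exp).hasDerivWithinAt (s := Ici (0:ℝ))
    refine this.congr_deriv ?_
    simp only [id_eq, mul_one]
    ring
  have hB : HasDerivWithinAt (fun s => C₀ - ∫ u in (0:ℝ)..s, h u) (-(h t)) (Ici 0) t :=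
    (hFTC t ht).const_sub C₀
  have hGd : HasDerivWithinAt G
      (-(β * Real.exp (β * t) * (C₀ - ∫ u in (0:ℝ)..t, h u) + Real.exp (β * t) * (-(h t))))
      (Ici 0) t := (hA.mul hB).neg
  have hval : β * (-(∫ r in Ici (0:ℝ), Real.exp (-β * r) * w (φ r (φ t x₀)))) + w (φ t x₀)
      = -(β * Real.exp (β * t) * (C₀ - ∫ u in (0:ℝ)..t, h u) + Real.exp (β * t) * (-(h t))) := by
    rw [Dkey t ht, Ekey t ht, hh]
    have hexp : Real.exp (β * t) * Real.exp (-β * t) = 1 := by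
      rw [← Real.exp_add]; ring_nf; exact Real.exp_zero
    have : Real.exp (β * t) * (Real.exp (-β * t) * w (φ t x₀)) = w (φ t x₀) := by
      rw [← mul_assoc, hexp, one_mul]
    ring_nf
    ring_nf at this ⊢
    nlinarith [this]
  rw [hval]
  exact hGd.congr (fun s hs => keyEq s hs) (keyEq t ht)
end

section
/- Let X ⊆ ℝⁿ be compact, let f, f_{u_1}, …, f_{u_m} : ℝⁿ → ℝⁿ and l_x, l_{u_1}, …, l_{u_m} : ℝⁿ → ℝ be continuous, let ρ, σ_1, …, σ_m : ℝⁿ → ℝ be continuously differentiable with ρ > 0 on X, and set u_i(x) := σ_i(x)/ρ(x), f̂ := ρ f + Σ_{i=1}^m f_{u_i} σ_i and l̂ := ρ l_x + Σ_{i=1}^m l_{u_i} σ_i. Let β > 0 and M ∈ ℝ, and suppose V̄ : ℝⁿ → ℝ is continuously differentiable with β ρ(x) V̄(x) − ∇V̄(x)·f̂(x) − l̂(x) ≥ 0 for all x ∈ X and V̄(x) ≥ M for all x ∈ ∂X. Let x : [0, τ] → ℝⁿ (with τ ∈ [0,∞) or the whole of [0,∞)) be differentiable with x′(t) = f(x(t))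 + Σ_{i=1}^m f_{u_i}(x(t)) u_i(x(t)). Then: (i) if x(t) ∈ X for all t ≥ 0, then V̄(x(0)) ≥ ∫_0^∞ e^{−βt} [ l_x(x(t)) + Σ_{i=1}^m l_{u_i}(x(t)) u_i(x(t)) ] dt; (ii) if x(t) ∈ X for all t ∈ [0, τ] and x(τ) ∈ ∂X, then V̄(x(0)) ≥ e^{−βτ} M + ∫_0^τ e^{−βt} [ l_x(x(t)) + Σ_{i=1}^m l_{u_i}(x(t)) u_i(x(t)) ] dt. -/
open MeasureTheory Set

lemma aux_main_vfub {n m : ℕ}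
    (X : Set (Fin n → ℝ))
    (f : (Fin n → ℝ) → (Fin n → ℝ)) (fu : Fin m → (Fin n → ℝ) → (Fin n → ℝ))
    (lx : (Fin n → ℝ) → ℝ) (lu : Fin m → (Fin n → ℝ) → ℝ)
    (hf : Continuous f) (hfu : ∀ i, Continuous (fu i))
    (hlx : Continuous lx) (hlu : ∀ i, Continuous (lu i))
    (ρ : (Fin n → ℝ) → ℝ) (σ : Fin m → (Fin n → ℝ) → ℝ)
    (hρ : ContDiff ℝ 1 ρ) (hσ : ∀ i, ContDiff ℝ 1 (σ i))
    (hρpos : ∀ x ∈ X, 0 < ρ x)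
    (β : ℝ)
    (V : (Fin n → ℝ) → ℝ) (hV : ContDiff ℝ 1 V)
    (hineq : ∀ x ∈ X, 0 ≤ β * ρ x * V x -
      fderiv ℝ V x (ρ x • f x + ∑ i, σ i x • fu i x) -
      (ρ x * lx x + ∑ i, lu i x * σ i x))
    (x : ℝ → (Fin n → ℝ)) (τ : ℝ) (hτ : 0 ≤ τ)
    (hderiv : ∀ t ∈ Icc (0:ℝ) τ, HasDerivWithinAt x
        (f (x t) + ∑ i, (σ i (x t) / ρ (x t)) • fu i (x t)) (Icc 0 τ) t)
    (hmem : ∀ t ∈ Icc (0:ℝ) τ, x t ∈ X) :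
    Real.exp (-β * τ) * V (x τ) + (∫ t in (0:ℝ)..τ, Real.exp (-β * t) *
        (lx (x t) + ∑ i, lu i (x t) * (σ i (x t) / ρ (x t)))) ≤ V (x 0) := by
  -- key pointwise inequality after dividing by ρ
  have key : ∀ p ∈ X, 0 ≤ β * V p -
      fderiv ℝ V p (f p + ∑ i, (σ i p / ρ p) • fu i p) -
      (lx p + ∑ i, lu i p * (σ i p / ρ p)) := by
    intro p hp
    have hρp := hρpos p hp
    have hne : ρ p ≠ 0 := hρp.ne'
    have h1 : ρ p • (f p + ∑ i, (σ i p / ρ p) • fu i p)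
        = ρ p • f p + ∑ i, σ i p • fu i p := by
      rw [smul_add, Finset.smul_sum]
      congr 1
      refine Finset.sum_congr rfl fun i _ => ?_
      rw [smul_smul, mul_comm, div_mul_cancel₀ _ hne]
    have h2 : ρ p * (lx p + ∑ i, lu i p * (σ i p / ρ p))
        = ρ p * lx p + ∑ i, lu i p * σ i p := by
      rw [mul_add, Finset.mul_sum]
      congr 1
      refine Finset.sum_congr rfl fun i _ => ?_
      field_simp
    have h0 := hineq p hp
    rw [← h1, ← h2] at h0
    rw [ContinuousLinearMap.map_smul, smul_eq_mul] at h0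
    have h3 : β * ρ p * V p - ρ p * (fderiv ℝ V p (f p + ∑ i, (σ i p / ρ p) • fu i p))
        - ρ p * (lx p + ∑ i, lu i p * (σ i p / ρ p))
        = ρ p * (β * V p - fderiv ℝ V p (f p + ∑ i, (σ i p / ρ p) • fu i p)
          - (lx p + ∑ i, lu i p * (σ i p / ρ p))) := by ring
    rw [h3] at h0
    exact (mul_nonneg_iff_of_pos_left hρp).mp h0
  have hxc : ContinuousOn x (Icc 0 τ) := fun t ht => (hderiv t ht).continuousWithinAt
  have hρc := hρ.continuous
  have hne : ∀ t ∈ Icc (0:ℝ) τ, ρ (x t) ≠ 0 := fun t ht => (hρpos _ (hmem t ht)).ne'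
  have hu : ∀ i, ContinuousOn (fun t => σ i (x t) / ρ (x t)) (Icc 0 τ) :=
    fun i => ((hσ i).continuous.comp_continuousOn hxc).div (hρc.comp_continuousOn hxc) hne
  have hLc : ContinuousOn
      (fun t => lx (x t) + ∑ i, lu i (x t) * (σ i (x t) / ρ (x t))) (Icc 0 τ) :=
    (hlx.comp_continuousOn hxc).add
      (continuousOn_finset_sum _ fun i _ => ((hlu i).comp_continuousOn hxc).mul (hu i))
  have hvelc : ContinuousOn
      (fun t => f (x t) + ∑ i, (σ i (x t) / ρ (x t)) • fu i (x t)) (Icc 0 τ) :=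
    (hf.comp_continuousOn hxc).add
      (continuousOn_finset_sum _ fun i _ => (hu i).smul ((hfu i).comp_continuousOn hxc))
  have hexpc : Continuous fun t : ℝ => Real.exp (-β * t) :=
    Real.continuous_exp.comp (continuous_const.mul continuous_id)
  have hDVc : ContinuousOn
      (fun t => fderiv ℝ V (x t) (f (x t) + ∑ i, (σ i (x t) / ρ (x t)) • fu i (x t)))
      (Icc 0 τ) :=
    ContinuousOn.clm_apply ((hV.continuous_fderiv one_ne_zero).comp_continuousOn hxc) hvelc
  -- h(t) = exp(-βt) V(x t)
  have hcont : ContinuousOn (fun t => Real.exp (-β * t) * V (x t)) (Icc 0 τ) :=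
    hexpc.continuousOn.mul (hV.continuous.comp_continuousOn hxc)
  have hh'c : ContinuousOn (fun t => Real.exp (-β * t) * (-β * V (x t) +
      fderiv ℝ V (x t) (f (x t) + ∑ i, (σ i (x t) / ρ (x t)) • fu i (x t)))) (Icc 0 τ) :=
    hexpc.continuousOn.mul
      ((continuous_const.continuousOn.mul (hV.continuous.comp_continuousOn hxc)).add hDVc)
  have hhd : ∀ t ∈ Icc (0:ℝ) τ, HasDerivWithinAt (fun t => Real.exp (-β * t) * V (x t))
      (Real.exp (-β * t) * (-β * V (x t) +
        fderiv ℝ V (x t) (f (x t) + ∑ i, (σ i (x t) / ρ (x t)) • fu i (x t))))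
      (Icc 0 τ) t := by
    intro t ht
    have he : HasDerivAt (fun s : ℝ => Real.exp (-β * s)) (Real.exp (-β * t) * (-β)) t := by
      have h1 : HasDerivAt (fun s : ℝ => -β * s) (-β) t := by
        simpa using (hasDerivAt_id t).const_mul (-β)
      exact h1.exp
    have hW : HasDerivWithinAt (fun s => V (x s))
        (fderiv ℝ V (x t) (f (x t) + ∑ i, (σ i (x t) / ρ (x t)) • fu i (x t)))
        (Icc 0 τ) t :=
      (hV.differentiable one_ne_zero (x t)).hasFDerivAt.comp_hasDerivWithinAt t (hderiv t ht)
    have := he.hasDerivWithinAt.mul hW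
    convert this using 1
    · rfl
    · rfl
    · rfl
    · ring
  have hτint : IntervalIntegrable (fun t => Real.exp (-β * t) * (-β * V (x t) +
      fderiv ℝ V (x t) (f (x t) + ∑ i, (σ i (x t) / ρ (x t)) • fu i (x t)))) volume 0 τ :=
    ContinuousOn.intervalIntegrable (by rwa [uIcc_of_le hτ])
  have hLint : IntervalIntegrable (fun t => -(Real.exp (-β * t) *
      (lx (x t) + ∑ i, lu i (x t) * (σ i (x t) / ρ (x t))))) volume 0 τ :=
    ContinuousOn.intervalIntegrable (by
      rw [uIcc_of_le hτ]; exact (hexpc.continuousOn.mul hLc).neg)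
  have hftc := intervalIntegral.integral_eq_sub_of_hasDeriv_right_of_le hτ hcont
    (fun t ht => (hhd t (Ioo_subset_Icc_self ht)).mono_of_mem_nhdsWithin
      (Icc_mem_nhdsGT_of_mem ⟨ht.1.le, ht.2⟩)) hτint
  have hmono := intervalIntegral.integral_mono_on hτ hτint hLint (by
    intro t ht
    have k := key (x t) (hmem t ht)
    nlinarith [mul_nonneg (Real.exp_nonneg (-β * t)) k])
  rw [hftc] at hmono
  rw [intervalIntegral.integral_neg] at hmono
  simp only [mul_zero, neg_zero, Real.exp_zero, one_mul] at hmono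
  linarith

/-- Verification theorem for upper bounds: if `β ρ V̄ − ∇V̄·f̂ − l̂ ≥ 0` on `X` and `V̄ ≥ M`
on `∂X`, then `V̄(x(0))` bounds from above the discounted cost of any closed-loop trajectory
of the rational controller `u = σ/ρ`, both for trajectories staying in `X` forever and for
trajectories stopped when hitting `∂X`. -/
theorem value_function_upper_bound_verification {n m : ℕ}
    (X : Set (Fin n → ℝ)) (hXc : IsCompact X)
    (f : (Fin n → ℝ) → (Fin n → ℝ)) (fu : Fin m → (Fin n → ℝ) → (Fin n → ℝ))
    (lx : (Fin n → ℝ) → ℝ) (lu : Fin m → (Fin n → ℝ) → ℝ)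
    (hf : Continuous f) (hfu : ∀ i, Continuous (fu i))
    (hlx : Continuous lx) (hlu : ∀ i, Continuous (lu i))
    (ρ : (Fin n → ℝ) → ℝ) (σ : Fin m → (Fin n → ℝ) → ℝ)
    (hρ : ContDiff ℝ 1 ρ) (hσ : ∀ i, ContDiff ℝ 1 (σ i))
    (hρpos : ∀ x ∈ X, 0 < ρ x)
    (β M : ℝ) (hβ : 0 < β)
    (V : (Fin n → ℝ) → ℝ) (hV : ContDiff ℝ 1 V)
    (hineq : ∀ x ∈ X, 0 ≤ β * ρ x * V x -
      fderiv ℝ V x (ρ x • f x + ∑ i, σ i x • fu i x) -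
      (ρ x * lx x + ∑ i, lu i x * σ i x))
    (hbd : ∀ x ∈ frontier X, M ≤ V x)
    (x : ℝ → (Fin n → ℝ)) :
    ((∀ t ∈ Ici (0:ℝ), HasDerivWithinAt x
        (f (x t) + ∑ i, (σ i (x t) / ρ (x t)) • fu i (x t)) (Ici 0) t) →
      (∀ t ∈ Ici (0:ℝ), x t ∈ X) →
      (∫ t in Ici (0:ℝ), Real.exp (-β * t) *
        (lx (x t) + ∑ i, lu i (x t) * (σ i (x t) / ρ (x t)))) ≤ V (x 0)) ∧
    (∀ τ : ℝ, 0 ≤ τ →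
      (∀ t ∈ Icc (0:ℝ) τ, HasDerivWithinAt x
        (f (x t) + ∑ i, (σ i (x t) / ρ (x t)) • fu i (x t)) (Icc 0 τ) t) →
      (∀ t ∈ Icc (0:ℝ) τ, x t ∈ X) → x τ ∈ frontier X →
      Real.exp (-β * τ) * M + (∫ t in (0:ℝ)..τ, Real.exp (-β * t) *
        (lx (x t) + ∑ i, lu i (x t) * (σ i (x t) / ρ (x t)))) ≤ V (x 0)) := by
  constructor
  · -- infinite-horizon part
    intro hderiv hmem
    have hxc : ContinuousOn x (Ici 0) := fun t ht => (hderiv t ht).continuousWithinAt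
    have hρc := hρ.continuous
    have hne : ∀ t ∈ Ici (0:ℝ), ρ (x t) ≠ 0 := fun t ht => (hρpos _ (hmem t ht)).ne'
    have hexpc : Continuous fun t : ℝ => Real.exp (-β * t) :=
      Real.continuous_exp.comp (continuous_const.mul continuous_id)
    have hgc : ContinuousOn (fun t => Real.exp (-β * t) *
        (lx (x t) + ∑ i, lu i (x t) * (σ i (x t) / ρ (x t)))) (Ici 0) :=
      hexpc.continuousOn.mul ((hlx.comp_continuousOn hxc).add
        (continuousOn_finset_sum _ fun i _ => ((hlu i).comp_continuousOn hxc).mul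
          (((hσ i).continuous.comp_continuousOn hxc).div (hρc.comp_continuousOn hxc) hne)))
    -- bounds on X
    obtain ⟨C, hC⟩ := hXc.exists_bound_of_continuousOn
      (f := fun p => lx p + ∑ i, lu i p * (σ i p / ρ p))
      (hlx.continuousOn.add (continuousOn_finset_sum _ fun i _ =>
        ((hlu i).continuousOn.mul (((hσ i).continuous.continuousOn).div
          hρ.continuous.continuousOn (fun p hp => (hρpos p hp).ne')))))
    obtain ⟨CV, hCV⟩ := hXc.exists_bound_of_continuousOn (f := V) hV.continuous.continuousOn
    -- integrability on Ici 0
    have hbint : IntegrableOn (fun t => C * Real.exp (-β * t)) (Ici 0) := by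
      rw [integrableOn_Ici_iff_integrableOn_Ioi]
      exact (exp_neg_integrableOn_Ioi 0 hβ).const_mul C
    have hgint : IntegrableOn (fun t => Real.exp (-β * t) *
        (lx (x t) + ∑ i, lu i (x t) * (σ i (x t) / ρ (x t)))) (Ici 0) := by
      refine Integrable.mono' hbint (hgc.aestronglyMeasurable measurableSet_Ici) ?_
      rw [ae_restrict_iff' measurableSet_Ici]
      filter_upwards with t
      intro ht
      have hCt := hC (x t) (hmem t ht)
      rw [Real.norm_eq_abs] at hCt ⊢
      rw [abs_mul, abs_of_pos (Real.exp_pos _)]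
      calc Real.exp (-β * t) * |lx (x t) + ∑ i, lu i (x t) * (σ i (x t) / ρ (x t))|
          ≤ Real.exp (-β * t) * C := by
            exact mul_le_mul_of_nonneg_left hCt (Real.exp_nonneg _)
        _ = C * Real.exp (-β * t) := mul_comm _ _
    -- for each N, bound the integral over Icc 0 N
    have hseq : ∀ N : ℕ, (∫ t in Icc (0:ℝ) (N:ℝ), Real.exp (-β * t) *
        (lx (x t) + ∑ i, lu i (x t) * (σ i (x t) / ρ (x t))))
        ≤ V (x 0) + CV * Real.exp (-β * N) := by
      intro N
      have h1 := aux_main_vfub X f fu lx lu hf hfu hlx hlu ρ σ hρ hσ hρpos β V hV hineq x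
        (N : ℝ) (Nat.cast_nonneg N)
        (fun t ht => (hderiv t ht.1).mono Icc_subset_Ici_self)
        (fun t ht => hmem t ht.1)
      have h2 : (∫ t in Icc (0:ℝ) (N:ℝ), Real.exp (-β * t) *
          (lx (x t) + ∑ i, lu i (x t) * (σ i (x t) / ρ (x t))))
          = ∫ t in (0:ℝ)..(N:ℝ), Real.exp (-β * t) *
          (lx (x t) + ∑ i, lu i (x t) * (σ i (x t) / ρ (x t))) := by
        rw [intervalIntegral.integral_of_le (Nat.cast_nonneg N), integral_Icc_eq_integral_Ioc]
      have h4 : -CV ≤ V (x (N:ℝ)) := by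
        have := hCV (x (N:ℝ)) (hmem _ (mem_Ici.mpr (Nat.cast_nonneg N)))
        rw [Real.norm_eq_abs] at this
        linarith [abs_le.mp this |>.1]
      have h5 : -(CV * Real.exp (-β * N)) ≤ Real.exp (-β * N) * V (x (N:ℝ)) := by
        nlinarith [Real.exp_nonneg (-β * (N:ℝ))]
      rw [h2]
      linarith
    have hmonoS : Monotone (fun N : ℕ => Icc (0:ℝ) (N:ℝ)) :=
      fun a b hab => Icc_subset_Icc le_rfl (Nat.cast_le.mpr hab)
    have hUnion : (⋃ N : ℕ, Icc (0:ℝ) (N:ℝ)) = Ici 0 := by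
      ext t
      simp only [mem_iUnion, mem_Icc, mem_Ici]
      constructor
      · rintro ⟨N, h1, _⟩; exact h1
      · intro ht; obtain ⟨N, hN⟩ := exists_nat_ge t; exact ⟨N, ht, hN⟩
    have htend := tendsto_setIntegral_of_monotone (fun N : ℕ => measurableSet_Icc) hmonoS
      (hUnion ▸ hgint)
    rw [hUnion] at htend
    have htend2 : Filter.Tendsto (fun N : ℕ => V (x 0) + CV * Real.exp (-β * N))
        Filter.atTop (nhds (V (x 0))) := by
      have hb : Filter.Tendsto (fun N : ℕ => -β * (N:ℝ)) Filter.atTop Filter.atBot := by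
        have := tendsto_natCast_atTop_atTop (R := ℝ)
        exact Filter.Tendsto.const_mul_atTop_of_neg (by linarith) this
      have he : Filter.Tendsto (fun N : ℕ => Real.exp (-β * N)) Filter.atTop (nhds 0) :=
        Real.tendsto_exp_atBot.comp hb
      simpa using Filter.Tendsto.add tendsto_const_nhds (he.const_mul CV)
    exact le_of_tendsto_of_tendsto' htend htend2 hseq
  · -- finite-horizon part
    intro τ hτ hderiv hmem hfr
    have h1 := aux_main_vfub X f fu lx lu hf hfu hlx hlu ρ σ hρ hσ hρpos β V hV hineq x
      τ hτ hderiv hmem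
    have h2 : M ≤ V (x τ) := hbd _ hfr
    have h3 : Real.exp (-β * τ) * M ≤ Real.exp (-β * τ) * V (x τ) :=
      mul_le_mul_of_nonneg_left h2 (Real.exp_nonneg _)
    linarith
end

section
/- Let X ⊆ ℝⁿ be compact, let f, f_{u_1}, …, f_{u_m} : ℝⁿ → ℝⁿ and l_x, l_{u_1}, …, l_{u_m} : ℝⁿ → ℝ be continuous, let ρ, σ_1, …, σ_m : ℝⁿ → ℝ be continuously differentiable with ρ > 0 on X, and set u_i(x) := σ_i(x)/ρ(x), f̂ := ρ f + Σ_{i=1}^m f_{u_i} σ_i and l̂ := ρ l_x + Σ_{i=1}^m l_{u_i} σ_i. Let β > 0 and M ∈ ℝ, and suppose V : ℝⁿ → ℝ is continuously differentiable with β ρ(x) V(x) − ∇V(x)·f̂(x) − l̂(x) ≤ 0 for all x ∈ X and V(x) ≤ M for all x ∈ ∂X. Let x : [0, τ] → ℝⁿ (with τ ∈ [0,∞) or the whole of [0,∞)) be differentiable with x′(t) = f(x(t)) + Σ_{i=1}^m f_{u_i}(x(t)) u_i(x(t)). Then: (i) if x(t) ∈ X for all t ≥ 0, then V(x(0)) ≤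 ∫_0^∞ e^{−βt} [ l_x(x(t)) + Σ_{i=1}^m l_{u_i}(x(t)) u_i(x(t)) ] dt; (ii) if x(t) ∈ X for all t ∈ [0, τ] and x(τ) ∈ ∂X, then V(x(0)) ≤ e^{−βτ} M + ∫_0^τ e^{−βt} [ l_x(x(t)) + Σ_{i=1}^m l_{u_i}(x(t)) u_i(x(t)) ] dt. -/
open MeasureTheory Set

lemma traj_core_bound {n m : ℕ}
    (X : Set (Fin n → ℝ))
    (f : (Fin n → ℝ) → (Fin n → ℝ)) (fu : Fin m → (Fin n → ℝ) → (Fin n → ℝ))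
    (lx : (Fin n → ℝ) → ℝ) (lu : Fin m → (Fin n → ℝ) → ℝ)
    (hf : Continuous f) (hfu : ∀ i, Continuous (fu i))
    (hlx : Continuous lx) (hlu : ∀ i, Continuous (lu i))
    (ρ : (Fin n → ℝ) → ℝ) (σ : Fin m → (Fin n → ℝ) → ℝ)
    (hρ : ContDiff ℝ 1 ρ) (hσ : ∀ i, ContDiff ℝ 1 (σ i))
    (hρpos : ∀ x ∈ X, 0 < ρ x)
    (β : ℝ)
    (V : (Fin n → ℝ) → ℝ) (hV : ContDiff ℝ 1 V)
    (hineq : ∀ x ∈ X, β * ρ x * V x -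
      fderiv ℝ V x (ρ x • f x + ∑ i, σ i x • fu i x) -
      (ρ x * lx x + ∑ i, lu i x * σ i x) ≤ 0)
    (x : ℝ → (Fin n → ℝ)) (τ : ℝ) (hτ : 0 ≤ τ)
    (hx : ∀ t ∈ Icc (0:ℝ) τ, HasDerivWithinAt x
        (f (x t) + ∑ i, (σ i (x t) / ρ (x t)) • fu i (x t)) (Icc 0 τ) t)
    (hxX : ∀ t ∈ Icc (0:ℝ) τ, x t ∈ X) :
    V (x 0) ≤ Real.exp (-β * τ) * V (x τ) + ∫ t in (0:ℝ)..τ, Real.exp (-β * t) *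
        (lx (x t) + ∑ i, lu i (x t) * (σ i (x t) / ρ (x t))) := by
  set vel : ℝ → (Fin n → ℝ) := fun t => f (x t) + ∑ i, (σ i (x t) / ρ (x t)) • fu i (x t)
    with hvel
  set L : ℝ → ℝ := fun t => lx (x t) + ∑ i, lu i (x t) * (σ i (x t) / ρ (x t)) with hL
  set D : ℝ → ℝ := fun t => fderiv ℝ V (x t) (vel t) with hD
  set g : ℝ → ℝ := fun t => Real.exp (-β * t) * V (x t) with hg
  set g' : ℝ → ℝ := fun t => (-β * Real.exp (-β * t)) * V (x t) + Real.exp (-β * t) * D t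
    with hg'
  have hxC : ContinuousOn x (Icc 0 τ) := fun t ht => (hx t ht).continuousWithinAt
  have hne : ∀ t ∈ Icc (0:ℝ) τ, ρ (x t) ≠ 0 := fun t ht => (hρpos _ (hxX t ht)).ne'
  -- derivative of g
  have hDg : ∀ t ∈ Icc (0:ℝ) τ, HasDerivWithinAt g (g' t) (Icc 0 τ) t := by
    intro t ht
    have h1 : HasDerivWithinAt (fun s => Real.exp (-β * s)) (-β * Real.exp (-β * t))
        (Icc 0 τ) t := by
      have := (((hasDerivAt_id t).const_mul (-β)).exp).hasDerivWithinAt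
        (s := Icc (0:ℝ) τ)
      simpa [id_eq, mul_comm] using this
    have h2 : HasDerivWithinAt (fun s => V (x s)) (D t) (Icc 0 τ) t :=
      (hV.differentiable one_ne_zero (x t)).hasFDerivAt.comp_hasDerivWithinAt t (hx t ht)
    exact h1.mul h2
  -- pointwise inequality
  have hg'ge : ∀ t ∈ Icc (0:ℝ) τ, -(Real.exp (-β * t) * L t) ≤ g' t := by
    intro t ht
    have hy := hxX t ht
    have hρy := hρpos _ hy
    have hne' : ρ (x t) ≠ 0 := hρy.ne'
    have h1 : (fderiv ℝ V (x t)) (ρ (x t) • f (x t) + ∑ i, σ i (x t) • fu i (x t))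
        = ρ (x t) * D t := by
      have heq : ρ (x t) • f (x t) + ∑ i, σ i (x t) • fu i (x t) = ρ (x t) • vel t := by
        simp only [hvel, smul_add, Finset.smul_sum, smul_smul]
        congr 1
        exact Finset.sum_congr rfl fun i _ => by
          rw [mul_comm (ρ (x t)), div_mul_cancel₀ _ hne']
      rw [heq]
      simp only [hD]
      rw [(fderiv ℝ V (x t)).map_smul, smul_eq_mul]
    have h2 : ρ (x t) * lx (x t) + ∑ i, lu i (x t) * σ i (x t) = ρ (x t) * L t := by
      simp only [hL, mul_add, Finset.mul_sum]
      congr 1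
      exact Finset.sum_congr rfl fun i _ => by field_simp
    have h3 := hineq (x t) hy
    rw [h1, h2] at h3
    have h4 : β * V (x t) - D t - L t ≤ 0 := by nlinarith
    have hexp : (0:ℝ) < Real.exp (-β * t) := Real.exp_pos _
    simp only [hg']
    nlinarith [mul_le_mul_of_nonneg_left h4 hexp.le]
  -- continuity facts
  have hvelC : ContinuousOn vel (Icc 0 τ) := by
    refine (hf.comp_continuousOn hxC).add ?_
    refine continuousOn_finset_sum _ fun i _ => ?_
    exact (((hσ i).continuous.comp_continuousOn hxC).div
      (hρ.continuous.comp_continuousOn hxC) hne).smul ((hfu i).comp_continuousOn hxC)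
  have hDC : ContinuousOn D (Icc 0 τ) :=
    ((hV.continuous_fderiv one_ne_zero).comp_continuousOn hxC).clm_apply hvelC
  have hLC : ContinuousOn L (Icc 0 τ) := by
    refine (hlx.comp_continuousOn hxC).add ?_
    refine continuousOn_finset_sum _ fun i _ => ?_
    exact ((hlu i).comp_continuousOn hxC).mul
      (((hσ i).continuous.comp_continuousOn hxC).div
        (hρ.continuous.comp_continuousOn hxC) hne)
  have hexpC : Continuous fun t : ℝ => Real.exp (-β * t) :=
    Real.continuous_exp.comp (continuous_const.mul continuous_id)
  have hgC : ContinuousOn g (Icc 0 τ) :=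
    hexpC.continuousOn.mul (hV.continuous.comp_continuousOn hxC)
  have hInt1 : IntervalIntegrable g' volume 0 τ := by
    apply ContinuousOn.intervalIntegrable
    rw [uIcc_of_le hτ]
    exact ((hexpC.continuousOn.mul (hV.continuous.comp_continuousOn hxC)).const_smul
      (-β)).add (hexpC.continuousOn.mul hDC) |>.congr fun t ht => by
        simp [hg', smul_eq_mul, mul_assoc]
  have hInt2 : IntervalIntegrable (fun t => -(Real.exp (-β * t) * L t)) volume 0 τ := by
    apply ContinuousOn.intervalIntegrable
    rw [uIcc_of_le hτ]
    exact (hexpC.continuousOn.mul hLC).neg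
  have hFTC : ∫ t in (0:ℝ)..τ, g' t = g τ - g 0 := by
    refine intervalIntegral.integral_eq_sub_of_hasDeriv_right_of_le hτ hgC
      (fun t ht => ?_) hInt1
    exact ((hDg t (Ioo_subset_Icc_self ht)).hasDerivAt
      (Icc_mem_nhds ht.1 ht.2)).hasDerivWithinAt
  have hmono : ∫ t in (0:ℝ)..τ, -(Real.exp (-β * t) * L t) ≤ ∫ t in (0:ℝ)..τ, g' t :=
    intervalIntegral.integral_mono_on hτ hInt2 hInt1 hg'ge
  rw [intervalIntegral.integral_neg, hFTC] at hmono
  have hg0 : g 0 = V (x 0) := by simp [hg]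
  have hgτ : g τ = Real.exp (-β * τ) * V (x τ) := rfl
  linarith

/-- Verification theorem for lower bounds: if `β ρ V − ∇V·f̂ − l̂ ≤ 0` on `X` and `V ≤ M`
on `∂X`, then `V(x(0))` bounds from below the discounted cost of any closed-loop trajectory
of the rational controller `u = σ/ρ`, both for trajectories staying in `X` forever and for
trajectories stopped when hitting `∂X`. -/
theorem value_function_lower_bound_verification {n m : ℕ}
    (X : Set (Fin n → ℝ)) (hXc : IsCompact X)
    (f : (Fin n → ℝ) → (Fin n → ℝ)) (fu : Fin m → (Fin n → ℝ) → (Fin n → ℝ))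
    (lx : (Fin n → ℝ) → ℝ) (lu : Fin m → (Fin n → ℝ) → ℝ)
    (hf : Continuous f) (hfu : ∀ i, Continuous (fu i))
    (hlx : Continuous lx) (hlu : ∀ i, Continuous (lu i))
    (ρ : (Fin n → ℝ) → ℝ) (σ : Fin m → (Fin n → ℝ) → ℝ)
    (hρ : ContDiff ℝ 1 ρ) (hσ : ∀ i, ContDiff ℝ 1 (σ i))
    (hρpos : ∀ x ∈ X, 0 < ρ x)
    (β M : ℝ) (hβ : 0 < β)
    (V : (Fin n → ℝ) → ℝ) (hV : ContDiff ℝ 1 V)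
    (hineq : ∀ x ∈ X, β * ρ x * V x -
      fderiv ℝ V x (ρ x • f x + ∑ i, σ i x • fu i x) -
      (ρ x * lx x + ∑ i, lu i x * σ i x) ≤ 0)
    (hbd : ∀ x ∈ frontier X, V x ≤ M)
    (x : ℝ → (Fin n → ℝ)) :
    ((∀ t ∈ Ici (0:ℝ), HasDerivWithinAt x
        (f (x t) + ∑ i, (σ i (x t) / ρ (x t)) • fu i (x t)) (Ici 0) t) →
      (∀ t ∈ Ici (0:ℝ), x t ∈ X) →
      V (x 0) ≤ ∫ t in Ici (0:ℝ), Real.exp (-β * t) *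
        (lx (x t) + ∑ i, lu i (x t) * (σ i (x t) / ρ (x t)))) ∧
    (∀ τ : ℝ, 0 ≤ τ →
      (∀ t ∈ Icc (0:ℝ) τ, HasDerivWithinAt x
        (f (x t) + ∑ i, (σ i (x t) / ρ (x t)) • fu i (x t)) (Icc 0 τ) t) →
      (∀ t ∈ Icc (0:ℝ) τ, x t ∈ X) → x τ ∈ frontier X →
      V (x 0) ≤ Real.exp (-β * τ) * M + ∫ t in (0:ℝ)..τ, Real.exp (-β * t) *
        (lx (x t) + ∑ i, lu i (x t) * (σ i (x t) / ρ (x t)))) := by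
  constructor
  · -- infinite-horizon part
    intro hd hxX
    have hx0 : x 0 ∈ X := hxX 0 self_mem_Ici
    obtain ⟨z, hzX, hz⟩ := hXc.exists_isMaxOn ⟨x 0, hx0⟩ hV.continuous.continuousOn
    set I : ℝ → ℝ := fun t => Real.exp (-β * t) *
      (lx (x t) + ∑ i, lu i (x t) * (σ i (x t) / ρ (x t))) with hI
    have hxC : ContinuousOn x (Ici 0) := fun t ht => (hd t ht).continuousWithinAt
    have hne : ∀ t ∈ Ici (0:ℝ), ρ (x t) ≠ 0 := fun t ht => (hρpos _ (hxX t ht)).ne'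
    have hexpC : Continuous fun t : ℝ => Real.exp (-β * t) :=
      Real.continuous_exp.comp (continuous_const.mul continuous_id)
    have hIC : ContinuousOn I (Ici 0) := by
      refine hexpC.continuousOn.mul ((hlx.comp_continuousOn hxC).add ?_)
      refine continuousOn_finset_sum _ fun i _ => ?_
      exact ((hlu i).comp_continuousOn hxC).mul
        (((hσ i).continuous.comp_continuousOn hxC).div
          (hρ.continuous.comp_continuousOn hxC) hne)
    -- uniform bound on the running cost
    have hFC : ContinuousOn (fun y => lx y + ∑ i, lu i y * (σ i y / ρ y)) X := by
      refine hlx.continuousOn.add ?_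
      refine continuousOn_finset_sum _ fun i _ => ?_
      exact ((hlu i).continuousOn).mul
        (((hσ i).continuous.continuousOn).div (hρ.continuous.continuousOn)
          (fun y hy => (hρpos y hy).ne'))
    obtain ⟨C, hC⟩ := hXc.exists_bound_of_continuousOn hFC
    have hInt : IntegrableOn I (Ici 0) := by
      have hbound : IntegrableOn (fun t => C * Real.exp (-β * t)) (Ici 0) := by
        rw [integrableOn_Ici_iff_integrableOn_Ioi]
        exact (exp_neg_integrableOn_Ioi 0 hβ).const_mul C
      refine Integrable.mono' hbound (hIC.aestronglyMeasurable measurableSet_Ici) ?_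
      filter_upwards [ae_restrict_mem measurableSet_Ici] with t ht
      calc ‖I t‖ = Real.exp (-β * t) * ‖lx (x t) + ∑ i, lu i (x t) * (σ i (x t) / ρ (x t))‖ := by
            rw [hI, norm_mul, Real.norm_of_nonneg (Real.exp_pos _).le]
        _ ≤ Real.exp (-β * t) * C :=
            mul_le_mul_of_nonneg_left (hC _ (hxX t ht)) (Real.exp_pos _).le
        _ = C * Real.exp (-β * t) := mul_comm _ _
    have hInt' : IntegrableOn I (Ioi 0) := hInt.mono_set Ioi_subset_Ici_self
    have htend1 : Filter.Tendsto (fun τ : ℝ => ∫ t in (0:ℝ)..τ, I t) Filter.atTop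
        (nhds (∫ t in Ioi (0:ℝ), I t)) :=
      intervalIntegral_tendsto_integral_Ioi 0 hInt' Filter.tendsto_id
    have htend2 : Filter.Tendsto (fun τ : ℝ => Real.exp (-β * τ) * V z) Filter.atTop
        (nhds 0) := by
      have h1 : Filter.Tendsto (fun τ : ℝ => -β * τ) Filter.atTop Filter.atBot :=
        Filter.tendsto_id.const_mul_atTop_of_neg (neg_neg_iff_pos.mpr hβ)
      simpa using (Real.tendsto_exp_atBot.comp h1).mul_const (V z)
    have htend := htend2.add htend1
    rw [zero_add] at htend
    have hev : ∀ᶠ τ in Filter.atTop, V (x 0) ≤ Real.exp (-β * τ) * V z + ∫ t in (0:ℝ)..τ, I t := by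
      filter_upwards [Filter.eventually_ge_atTop (0:ℝ)] with τ hτ
      have hkey := traj_core_bound X f fu lx lu hf hfu hlx hlu ρ σ hρ hσ hρpos β V hV hineq
        x τ hτ (fun t ht => (hd t ht.1).mono Icc_subset_Ici_self) (fun t ht => hxX t ht.1)
      have h1 : V (x τ) ≤ V z := hz (hxX τ hτ)
      have h2 := mul_le_mul_of_nonneg_left h1 (Real.exp_pos (-β * τ)).le
      calc V (x 0) ≤ _ := hkey
        _ ≤ Real.exp (-β * τ) * V z + ∫ t in (0:ℝ)..τ, I t := by
            exact add_le_add_left h2 _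
    have hfin : V (x 0) ≤ ∫ t in Ioi (0:ℝ), I t := ge_of_tendsto htend hev
    rw [integral_Ici_eq_integral_Ioi]
    exact hfin
  · -- finite-horizon part
    intro τ hτ hd hxX hfr
    have hkey := traj_core_bound X f fu lx lu hf hfu hlx hlu ρ σ hρ hσ hρpos β V hV hineq
      x τ hτ hd hxX
    have h1 : V (x τ) ≤ M := hbd _ hfr
    have h2 := mul_le_mul_of_nonneg_left h1 (Real.exp_pos (-β * τ)).le
    linarith
end

section
/- Let X ⊆ ℝⁿ be compact, let f, f_{u_1}, …, f_{u_m} : ℝⁿ → ℝⁿ and l_x, l_{u_1}, …, l_{u_m} : ℝⁿ → ℝ be continuous, let ū > 0, β > 0 and M ∈ ℝ. Suppose V : ℝⁿ → ℝ and p_1, …, p_m : ℝⁿ → ℝ are continuously differentiable and satisfy, for all x ∈ X: (a) l_x(x) − β V(x) + ∇V(x)·f(x) + ū Σ_{i=1}^m p_i(x) ≥ 0; (b) l_{u_i}(x) + ∇V(x)·f_{u_i}(x) − p_i(x) ≥ 0 for i = 1,…,m; (c) p_i(x) ≤ 0 for i = 1,…,m; and (d) V(x) ≤ M for all x ∈ ∂X.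 Let u : [0,∞) → [0, ū]^m be measurable and let x : [0, τ] → ℝⁿ be differentiable with x′(t) = f(x(t)) + Σ_{i=1}^m f_{u_i}(x(t)) u_i(t). Then: (i) if x(t) ∈ X for all t ≥ 0, then V(x(0)) ≤ ∫_0^∞ e^{−βt} [ l_x(x(t)) + Σ_{i=1}^m l_{u_i}(x(t)) u_i(t) ] dt; (ii) if x(t) ∈ X for all t ∈ [0, τ] and x(τ) ∈ ∂X, then V(x(0)) ≤ e^{−βτ} M + ∫_0^τ e^{−βt} [ l_x(x(t)) + Σ_{i=1}^m l_{u_i}(x(t)) u_i(t) ] dt. In particular, V is a lower bound on the optimal value function of the discounted optimal control problem on X with input constraint set [0, ū]^m. -/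
open MeasureTheory Set

lemma key_aux {n m : ℕ}
    (X : Set (Fin n → ℝ)) (hXc : IsCompact X)
    (f : (Fin n → ℝ) → (Fin n → ℝ)) (fu : Fin m → (Fin n → ℝ) → (Fin n → ℝ))
    (lx : (Fin n → ℝ) → ℝ) (lu : Fin m → (Fin n → ℝ) → ℝ)
    (hf : Continuous f) (hfu : ∀ i, Continuous (fu i))
    (hlx : Continuous lx) (hlu : ∀ i, Continuous (lu i))
    (ubar β : ℝ)
    (V : (Fin n → ℝ) → ℝ) (p : Fin m → (Fin n → ℝ) → ℝ)
    (hV : ContDiff ℝ 1 V)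
    (ha : ∀ x ∈ X, 0 ≤ lx x - β * V x + fderiv ℝ V x (f x) + ubar * ∑ i, p i x)
    (hb : ∀ x ∈ X, ∀ i, 0 ≤ lu i x + fderiv ℝ V x (fu i x) - p i x)
    (hc : ∀ x ∈ X, ∀ i, p i x ≤ 0)
    (u : ℝ → Fin m → ℝ) (humeas : Measurable u)
    (hu : ∀ t ∈ Ici (0:ℝ), ∀ i, u t i ∈ Icc 0 ubar)
    (x : ℝ → (Fin n → ℝ)) (τ : ℝ) (hτ : 0 ≤ τ)
    (hderiv : ∀ t ∈ Icc (0:ℝ) τ, HasDerivWithinAt x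
        (f (x t) + ∑ i, u t i • fu i (x t)) (Icc 0 τ) t)
    (hmem : ∀ t ∈ Icc (0:ℝ) τ, x t ∈ X) :
    V (x 0) ≤ Real.exp (-β * τ) * V (x τ) + ∫ t in (0:ℝ)..τ, Real.exp (-β * t) *
        (lx (x t) + ∑ i, lu i (x t) * u t i) := by
  set w : ℝ → (Fin n → ℝ) := fun t => f (x t) + ∑ i, u t i • fu i (x t) with hw
  set h : ℝ → ℝ := fun t => Real.exp (-β * t) * V (x t) with hh
  set h' : ℝ → ℝ := fun t => Real.exp (-β * t) * (fderiv ℝ V (x t) (w t) - β * V (x t)) with hh'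
  set L : ℝ → ℝ := fun t => Real.exp (-β * t) * (lx (x t) + ∑ i, lu i (x t) * u t i) with hL
  have hVd : Differentiable ℝ V := hV.differentiable one_ne_zero
  -- derivative of h
  have hhd : ∀ t ∈ Icc (0:ℝ) τ, HasDerivWithinAt h (h' t) (Icc 0 τ) t := by
    intro t ht
    have he : HasDerivWithinAt (fun t => Real.exp (-β * t))
        (Real.exp (-β * t) * (-β)) (Icc 0 τ) t := by
      simpa using (((hasDerivAt_id t).const_mul (-β)).exp).hasDerivWithinAt
    have hvx : HasDerivWithinAt (fun t => V (x t)) (fderiv ℝ V (x t) (w t)) (Icc 0 τ) t :=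
      (hVd (x t)).hasFDerivAt.comp_hasDerivWithinAt t (hderiv t ht)
    have := he.mul hvx
    refine this.congr_deriv ?_
    simp [hh']; ring
  -- continuity of x and h on Icc
  have hxc : ContinuousOn x (Icc 0 τ) := fun t ht => (hderiv t ht).continuousWithinAt
  have hhc : ContinuousOn h (Icc 0 τ) := fun t ht => (hhd t ht).continuousWithinAt
  -- measurability
  have hmeasIcc : MeasurableSet (Icc (0:ℝ) τ) := measurableSet_Icc
  have hIoc : MeasurableSet (Ioc (0:ℝ) τ) := measurableSet_Ioc
  have hxm : AEMeasurable x (volume.restrict (Ioc 0 τ)) := by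
    have := hxc.mono (Ioc_subset_Icc_self : Ioc (0:ℝ) τ ⊆ Icc 0 τ)
    exact this.aemeasurable hIoc
  have hum : ∀ i, AEMeasurable (fun t => u t i) (volume.restrict (Ioc 0 τ)) :=
    fun i => ((measurable_pi_apply i).comp humeas).aemeasurable
  have hwm : AEMeasurable w (volume.restrict (Ioc 0 τ)) := by
    refine (hf.measurable.comp_aemeasurable hxm).add ?_
    exact Finset.aemeasurable_fun_sum _ fun i _ =>
      (hum i).smul ((hfu i).measurable.comp_aemeasurable hxm)
  have hAm : AEMeasurable (fun t => fderiv ℝ V (x t)) (volume.restrict (Ioc 0 τ)) :=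
    (hV.continuous_fderiv one_ne_zero).measurable.comp_aemeasurable hxm
  have hAwm : AEMeasurable (fun t => fderiv ℝ V (x t) (w t)) (volume.restrict (Ioc 0 τ)) := by
    have : Continuous fun q : ((Fin n → ℝ) →L[ℝ] ℝ) × (Fin n → ℝ) => q.1 q.2 :=
      isBoundedBilinearMap_apply.continuous
    exact this.measurable.comp_aemeasurable (hAm.prodMk hwm)
  have hexpm : Measurable fun t : ℝ => Real.exp (-β * t) :=
    (Real.continuous_exp.comp (continuous_const.mul continuous_id)).measurable
  have hh'm : AEMeasurable h' (volume.restrict (Ioc 0 τ)) := by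
    exact hexpm.aemeasurable.mul (hAwm.sub
      (aemeasurable_const.mul (hV.continuous.measurable.comp_aemeasurable hxm)))
  have hLm : AEMeasurable L (volume.restrict (Ioc 0 τ)) := by
    refine hexpm.aemeasurable.mul (((hlx.measurable.comp_aemeasurable hxm)).add ?_)
    exact Finset.aemeasurable_fun_sum _ fun i _ =>
      ((hlu i).measurable.comp_aemeasurable hxm).mul (hum i)
  -- bounds
  obtain ⟨CV, hCV⟩ := hXc.exists_bound_of_continuousOn hV.continuous.continuousOn
  obtain ⟨CA, hCA⟩ := hXc.exists_bound_of_continuousOn (hV.continuous_fderiv one_ne_zero).continuousOn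
  obtain ⟨Cf, hCf⟩ := hXc.exists_bound_of_continuousOn hf.continuousOn
  choose Cfu hCfu using fun i => hXc.exists_bound_of_continuousOn (hfu i).continuousOn
  obtain ⟨Clx, hClx⟩ := hXc.exists_bound_of_continuousOn hlx.continuousOn
  choose Clu hClu using fun i => hXc.exists_bound_of_continuousOn (hlu i).continuousOn
  have hub : ∀ t ∈ Icc (0:ℝ) τ, ∀ i, |u t i| ≤ |ubar| := by
    intro t ht i
    have := hu t (mem_Ici.2 ht.1) i
    rw [abs_le]
    constructor
    · linarith [abs_nonneg ubar, this.1]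
    · exact this.2.trans (le_abs_self _)
  have hwb : ∀ t ∈ Icc (0:ℝ) τ, ‖w t‖ ≤ Cf + ∑ i, |ubar| * Cfu i := by
    intro t ht
    refine (norm_add_le _ _).trans (add_le_add (hCf _ (hmem t ht)) ?_)
    refine (norm_sum_le _ _).trans (Finset.sum_le_sum fun i _ => ?_)
    rw [norm_smul]
    exact mul_le_mul (hub t ht i) (hCfu i _ (hmem t ht))
      (norm_nonneg _) (abs_nonneg _)
  have hexple : ∀ t ∈ Icc (0:ℝ) τ, Real.exp (-β * t) ≤ Real.exp (|β| * τ) := by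
    intro t ht
    apply Real.exp_le_exp.2
    have h1 : -β * t ≤ |β| * |t| := by
      calc -β * t ≤ |(-β) * t| := le_abs_self _
      _ = |β| * |t| := by rw [abs_mul, abs_neg]
    have h2 : |t| ≤ τ := by rw [abs_of_nonneg ht.1]; exact ht.2
    calc -β * t ≤ |β| * |t| := h1
    _ ≤ |β| * τ := by nlinarith [abs_nonneg β, abs_nonneg t]
  -- integrability
  have hh'b : ∀ t ∈ Icc (0:ℝ) τ, ‖h' t‖ ≤
      Real.exp (|β| * τ) * (CA * (Cf + ∑ i, |ubar| * Cfu i) + |β| * CV) := by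
    intro t ht
    simp only [hh', norm_mul, Real.norm_eq_abs]
    rw [Real.abs_exp]
    refine mul_le_mul (hexple t ht) ?_ (abs_nonneg _) (Real.exp_nonneg _)
    refine (abs_sub _ _).trans (add_le_add ?_ ?_)
    · calc |fderiv ℝ V (x t) (w t)| ≤ ‖fderiv ℝ V (x t)‖ * ‖w t‖ :=
        (fderiv ℝ V (x t)).le_opNorm _
      _ ≤ CA * (Cf + ∑ i, |ubar| * Cfu i) := by
          apply mul_le_mul (hCA _ (hmem t ht)) (hwb t ht) (norm_nonneg _)
          exact le_trans (norm_nonneg _) (hCA _ (hmem 0 ⟨le_refl _, hτ⟩))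
    · rw [abs_mul]
      exact mul_le_mul le_rfl (hCV _ (hmem t ht)) (abs_nonneg _) (abs_nonneg _)
  have hLb : ∀ t ∈ Icc (0:ℝ) τ, ‖L t‖ ≤
      Real.exp (|β| * τ) * (Clx + ∑ i, Clu i * |ubar|) := by
    intro t ht
    simp only [hL, norm_mul, Real.norm_eq_abs]
    rw [Real.abs_exp]
    refine mul_le_mul (hexple t ht) ?_ (abs_nonneg _) (Real.exp_nonneg _)
    refine (abs_add_le _ _).trans (add_le_add (hClx _ (hmem t ht)) ?_)
    refine (Finset.abs_sum_le_sum_abs _ _).trans (Finset.sum_le_sum fun i _ => ?_)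
    rw [abs_mul]
    exact mul_le_mul (hClu i _ (hmem t ht)) (hub t ht i) (abs_nonneg _)
      (le_trans (abs_nonneg _) (hClu i _ (hmem 0 ⟨le_refl _, hτ⟩)))
  have hh'i : IntervalIntegrable h' volume 0 τ := by
    rw [intervalIntegrable_iff, uIoc_of_le hτ]
    refine Integrable.mono' (integrable_const
      (Real.exp (|β| * τ) * (CA * (Cf + ∑ i, |ubar| * Cfu i) + |β| * CV)))
      hh'm.aestronglyMeasurable ?_
    refine (ae_restrict_iff' hIoc).2 (ae_of_all _ fun t ht => hh'b t (Ioc_subset_Icc_self ht))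
  have hLi : IntervalIntegrable L volume 0 τ := by
    rw [intervalIntegrable_iff, uIoc_of_le hτ]
    refine Integrable.mono' (integrable_const
      (Real.exp (|β| * τ) * (Clx + ∑ i, Clu i * |ubar|)))
      hLm.aestronglyMeasurable ?_
    refine (ae_restrict_iff' hIoc).2 (ae_of_all _ fun t ht => hLb t (Ioc_subset_Icc_self ht))
  -- FTC
  have hftc : ∫ t in (0:ℝ)..τ, h' t = h τ - h 0 := by
    refine intervalIntegral.integral_eq_sub_of_hasDeriv_right_of_le hτ hhc ?_ hh'i
    intro t ht
    have : HasDerivAt h (h' t) t :=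
      (hhd t (Ioo_subset_Icc_self ht)).hasDerivAt (Icc_mem_nhds ht.1 ht.2)
    exact this.hasDerivWithinAt
  -- pointwise inequality: -h' ≤ L on Icc
  have hpt : ∀ t ∈ Icc (0:ℝ) τ, -h' t ≤ L t := by
    intro t ht
    have hxX := hmem t ht
    have hut := fun i => hu t (mem_Ici.2 ht.1) i
    set A := fderiv ℝ V (x t) with hA
    have hAw : A (w t) = A (f (x t)) + ∑ i, u t i * A (fu i (x t)) := by
      rw [hw]
      simp only [map_add, map_sum, ContinuousLinearMap.map_smul, smul_eq_mul]
    have hE : 0 ≤ (lx (x t) + ∑ i, lu i (x t) * u t i) + (A (w t) - β * V (x t)) := by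
      rw [hAw]
      have h1 := ha (x t) hxX
      have h2 : 0 ≤ ∑ i, u t i * (lu i (x t) + A (fu i (x t)) - p i (x t)) :=
        Finset.sum_nonneg fun i _ => mul_nonneg (hut i).1 (hb (x t) hxX i)
      have h3 : 0 ≤ ∑ i, (ubar - u t i) * (-(p i (x t))) :=
        Finset.sum_nonneg fun i _ => mul_nonneg (by linarith [(hut i).2])
          (by linarith [hc (x t) hxX i])
      have hsum : (lx (x t) + ∑ i, lu i (x t) * u t i) +
          ((A (f (x t)) + ∑ i, u t i * A (fu i (x t))) - β * V (x t)) =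
          (lx (x t) - β * V (x t) + A (f (x t)) + ubar * ∑ i, p i (x t)) +
          (∑ i, u t i * (lu i (x t) + A (fu i (x t)) - p i (x t))) +
          (∑ i, (ubar - u t i) * (-(p i (x t)))) := by
        simp only [mul_add, mul_sub, sub_mul, mul_neg, neg_mul, Finset.sum_add_distrib,
          Finset.sum_sub_distrib, Finset.sum_neg_distrib, ← Finset.mul_sum, mul_comm]
        ring
      rw [hsum]
      linarith
    have hexp : 0 < Real.exp (-β * t) := Real.exp_pos _
    have key : L t + h' t = Real.exp (-β * t) *
        ((lx (x t) + ∑ i, lu i (x t) * u t i) + (A (w t) - β * V (x t))) := by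
      simp only [hh', hL, hA]; ring
    have h4 : 0 ≤ L t + h' t := by rw [key]; exact mul_nonneg hexp.le hE
    linarith
  -- conclude
  have hmono : ∫ t in (0:ℝ)..τ, -h' t ≤ ∫ t in (0:ℝ)..τ, L t :=
    intervalIntegral.integral_mono_on hτ hh'i.neg hLi hpt
  rw [intervalIntegral.integral_neg, hftc] at hmono
  have h0 : h 0 = V (x 0) := by simp [hh]
  have hτ' : h τ = Real.exp (-β * τ) * V (x τ) := rfl
  simp only [hL] at hmono ⊢
  linarith [hmono, h0.symm.le]

/-- Lower bound on the optimal value function of the discounted optimal control problem: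
if `V, p₁, …, p_m` satisfy the SOS-type inequalities (a)–(d) pointwise on `X`, then `V(x(0))`
is a lower bound on the discounted cost of any admissible trajectory with measurable
open-loop control `u(t) ∈ [0, ū]^m`, both for trajectories staying in `X` forever and
for trajectories stopped upon hitting `∂X`. -/
theorem optimal_value_lower_bound {n m : ℕ}
    (X : Set (Fin n → ℝ)) (hXc : IsCompact X)
    (f : (Fin n → ℝ) → (Fin n → ℝ)) (fu : Fin m → (Fin n → ℝ) → (Fin n → ℝ))
    (lx : (Fin n → ℝ) → ℝ) (lu : Fin m → (Fin n → ℝ) → ℝ)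
    (hf : Continuous f) (hfu : ∀ i, Continuous (fu i))
    (hlx : Continuous lx) (hlu : ∀ i, Continuous (lu i))
    (ubar β M : ℝ) (hubar : 0 < ubar) (hβ : 0 < β)
    (V : (Fin n → ℝ) → ℝ) (p : Fin m → (Fin n → ℝ) → ℝ)
    (hV : ContDiff ℝ 1 V) (hp : ∀ i, ContDiff ℝ 1 (p i))
    (ha : ∀ x ∈ X, 0 ≤ lx x - β * V x + fderiv ℝ V x (f x) + ubar * ∑ i, p i x)
    (hb : ∀ x ∈ X, ∀ i, 0 ≤ lu i x + fderiv ℝ V x (fu i x) - p i x)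
    (hc : ∀ x ∈ X, ∀ i, p i x ≤ 0)
    (hd : ∀ x ∈ frontier X, V x ≤ M)
    (u : ℝ → Fin m → ℝ) (humeas : Measurable u)
    (hu : ∀ t ∈ Ici (0:ℝ), ∀ i, u t i ∈ Icc 0 ubar)
    (x : ℝ → (Fin n → ℝ)) :
    ((∀ t ∈ Ici (0:ℝ), HasDerivWithinAt x
        (f (x t) + ∑ i, u t i • fu i (x t)) (Ici 0) t) →
      (∀ t ∈ Ici (0:ℝ), x t ∈ X) →
      V (x 0) ≤ ∫ t in Ici (0:ℝ), Real.exp (-β * t) *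
        (lx (x t) + ∑ i, lu i (x t) * u t i)) ∧
    (∀ τ : ℝ, 0 ≤ τ →
      (∀ t ∈ Icc (0:ℝ) τ, HasDerivWithinAt x
        (f (x t) + ∑ i, u t i • fu i (x t)) (Icc 0 τ) t) →
      (∀ t ∈ Icc (0:ℝ) τ, x t ∈ X) → x τ ∈ frontier X →
      V (x 0) ≤ Real.exp (-β * τ) * M + ∫ t in (0:ℝ)..τ, Real.exp (-β * t) *
        (lx (x t) + ∑ i, lu i (x t) * u t i)) := by
  set L : ℝ → ℝ := fun t => Real.exp (-β * t) * (lx (x t) + ∑ i, lu i (x t) * u t i) with hL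
  constructor
  · -- infinite-horizon case
    intro hderiv hmem
    have hkey : ∀ T : ℝ, 0 ≤ T → V (x 0) ≤ Real.exp (-β * T) * V (x T) +
        ∫ t in (0:ℝ)..T, L t := by
      intro T hT
      exact key_aux X hXc f fu lx lu hf hfu hlx hlu ubar β V p hV ha hb hc u humeas hu x T hT
        (fun t ht => (hderiv t (Icc_subset_Ici_self ht)).mono Icc_subset_Ici_self)
        (fun t ht => hmem t (Icc_subset_Ici_self ht))
    obtain ⟨CV, hCV⟩ := hXc.exists_bound_of_continuousOn hV.continuous.continuousOn
    obtain ⟨Clx, hClx⟩ := hXc.exists_bound_of_continuousOn hlx.continuousOn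
    choose Clu hClu using fun i => hXc.exists_bound_of_continuousOn (hlu i).continuousOn
    set CL : ℝ := Clx + ∑ i, Clu i * |ubar| with hCL
    -- integrability of L on Ici 0
    have hxc : ContinuousOn x (Ici 0) := fun t ht => (hderiv t ht).continuousWithinAt
    have hIoi : MeasurableSet (Ioi (0:ℝ)) := measurableSet_Ioi
    have hxm : AEMeasurable x (volume.restrict (Ioi 0)) :=
      (hxc.mono Ioi_subset_Ici_self).aemeasurable hIoi
    have hum : ∀ i, AEMeasurable (fun t => u t i) (volume.restrict (Ioi 0)) :=
      fun i => ((measurable_pi_apply i).comp humeas).aemeasurable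
    have hexpm : Measurable fun t : ℝ => Real.exp (-β * t) :=
      (Real.continuous_exp.comp (continuous_const.mul continuous_id)).measurable
    have hLm : AEMeasurable L (volume.restrict (Ioi 0)) := by
      refine hexpm.aemeasurable.mul ((hlx.measurable.comp_aemeasurable hxm).add ?_)
      exact Finset.aemeasurable_fun_sum _ fun i _ =>
        ((hlu i).measurable.comp_aemeasurable hxm).mul (hum i)
    have hub : ∀ t ∈ Ici (0:ℝ), ∀ i, |u t i| ≤ |ubar| := by
      intro t ht i
      have := hu t ht i
      rw [abs_le]
      exact ⟨by linarith [abs_nonneg ubar, this.1], this.2.trans (le_abs_self _)⟩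
    have hLb : ∀ t ∈ Ici (0:ℝ), ‖L t‖ ≤ CL * Real.exp (-β * t) := by
      intro t ht
      simp only [hL, norm_mul, Real.norm_eq_abs, Real.abs_exp]
      rw [mul_comm]
      refine mul_le_mul_of_nonneg_right ?_ (Real.exp_nonneg _)
      refine (abs_add_le _ _).trans (add_le_add (hClx _ (hmem t ht)) ?_)
      refine (Finset.abs_sum_le_sum_abs _ _).trans (Finset.sum_le_sum fun i _ => ?_)
      rw [abs_mul]
      exact mul_le_mul (hClu i _ (hmem t ht)) (hub t ht i) (abs_nonneg _)
        (le_trans (abs_nonneg _) (hClu i _ (hmem 0 self_mem_Ici)))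
    have hLint : IntegrableOn L (Ioi 0) := by
      refine Integrable.mono' (((exp_neg_integrableOn_Ioi 0 hβ)).const_mul CL)
        hLm.aestronglyMeasurable ?_
      refine (ae_restrict_iff' hIoi).2 (ae_of_all _ fun t ht => ?_)
      simpa [mul_comm] using hLb t (mem_Ici.2 (le_of_lt ht))
    -- limits
    have htend : Filter.Tendsto (fun T => ∫ t in (0:ℝ)..T, L t) Filter.atTop
        (nhds (∫ t in Ioi (0:ℝ), L t)) :=
      MeasureTheory.intervalIntegral_tendsto_integral_Ioi 0 hLint Filter.tendsto_id
    have hexp0 : Filter.Tendsto (fun T : ℝ => Real.exp (-β * T)) Filter.atTop (nhds 0) := by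
      have h1 : Filter.Tendsto (fun T : ℝ => β * T) Filter.atTop Filter.atTop :=
        Filter.Tendsto.const_mul_atTop hβ Filter.tendsto_id
      exact (Real.tendsto_exp_neg_atTop_nhds_zero.comp h1).congr
        fun T => by simp [Function.comp, neg_mul]
    have hlhs : Filter.Tendsto (fun T : ℝ => V (x 0) - CV * Real.exp (-β * T))
        Filter.atTop (nhds (V (x 0))) := by
      have h2 : Filter.Tendsto (fun T : ℝ => V (x 0) - CV * Real.exp (-β * T))
          Filter.atTop (nhds (V (x 0) - CV * 0)) :=
        Filter.Tendsto.sub tendsto_const_nhds (hexp0.const_mul CV)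
      simpa using h2
    have hineq : ∀ᶠ T : ℝ in Filter.atTop,
        V (x 0) - CV * Real.exp (-β * T) ≤ ∫ t in (0:ℝ)..T, L t := by
      filter_upwards [Filter.eventually_ge_atTop (0:ℝ)] with T hT
      have h1 := hkey T hT
      have h2 : Real.exp (-β * T) * V (x T) ≤ Real.exp (-β * T) * CV :=
        mul_le_mul_of_nonneg_left ((le_abs_self _).trans (hCV _ (hmem T hT)))
          (Real.exp_nonneg _)
      nlinarith [h1, h2]
    have hfin : V (x 0) ≤ ∫ t in Ioi (0:ℝ), L t :=
      le_of_tendsto_of_tendsto hlhs htend hineq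
    rwa [MeasureTheory.integral_Ici_eq_integral_Ioi]
  · -- stopped case
    intro τ hτ hderiv hmem hfront
    have h1 := key_aux X hXc f fu lx lu hf hfu hlx hlu ubar β V p hV ha hb hc u humeas hu x τ hτ
      hderiv hmem
    have h2 : Real.exp (-β * τ) * V (x τ) ≤ Real.exp (-β * τ) * M :=
      mul_le_mul_of_nonneg_left (hd _ hfront) (Real.exp_nonneg _)
    linarith
end
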